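/- arXiv:1904.04753 — 6 statements merged into one kernel-verified Lean document; each statement's English description precedes it below -/
import Mathlib

section
/- Let v_1, …, v_k (k ≥ 2, vertices distinct) be a directed cycle in G*, i.e., (v_1,v_2), …, (v_{k−1},v_k), (v_k,v_1) are all directed edges of G*. If the vertex set T = {v_1,…,v_k} is an independent set of G*_u, then either T = {2,7,10} or T = {3,6,11}. -/
/-- The want sets `W₁, W₂, W₃` of the three receivers. -/
def Wset : Fin 3 → Finset ℕ
  | 0 => {1, 2, 3, 4}
  | 1 => {5, 6, 7, 8}
  | 2 => {9, 10, 11, 12}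

/-- The side information sets `K₁, K₂, K₃` of the three receivers. -/
def Kset : Fin 3 → Finset ℕ
  | 0 => {5, 6, 9, 10}
  | 1 => {1, 2, 9, 11}
  | 2 => {1, 3, 5, 7}

/-- Directed edge relation of the side information graph `G*` on `{1, …, 12}`:
`(a, b)` is an edge iff `a ∈ Wᵢ` and `b ∈ Kᵢ` for the (unique) `i` with `a ∈ Wᵢ`. -/
def Gedge (a b : ℕ) : Prop := ∃ i : Fin 3, a ∈ Wset i ∧ b ∈ Kset i

/-- The underlying undirected side information graph `G*ᵤ`: distinct `a, b` are adjacent iff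
both `(a, b)` and `(b, a)` are directed edges of `G*`. -/
def Gu : SimpleGraph ℕ where
  Adj a b := a ≠ b ∧ Gedge a b ∧ Gedge b a
  symm := by
    constructor
    intro a b h
    exact ⟨h.1.symm, h.2.2, h.2.1⟩
  loopless := by
    constructor
    intro a h
    exact h.1 rfl

instance instDecGedge (a b : ℕ) : Decidable (Gedge a b) := by
  unfold Gedge; infer_instance

lemma adj' (a b : ℕ) (h : a ≠ b ∧ Gedge a b ∧ Gedge b a) : Gu.Adj a b := h

lemma gedge1 {y : ℕ} (h : Gedge 1 y) : y = 5 ∨ y = 6 ∨ y = 9 ∨ y = 10 := by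
  obtain ⟨i, hw, hk⟩ := h
  fin_cases i <;> simp [Wset, Kset] at hw hk <;> omega

lemma gedge2 {y : ℕ} (h : Gedge 2 y) : y = 5 ∨ y = 6 ∨ y = 9 ∨ y = 10 := by
  obtain ⟨i, hw, hk⟩ := h
  fin_cases i <;> simp [Wset, Kset] at hw hk <;> omega

lemma gedge3 {y : ℕ} (h : Gedge 3 y) : y = 5 ∨ y = 6 ∨ y = 9 ∨ y = 10 := by
  obtain ⟨i, hw, hk⟩ := h
  fin_cases i <;> simp [Wset, Kset] at hw hk <;> omega

lemma gedge5 {y : ℕ} (h : Gedge 5 y) : y = 1 ∨ y = 2 ∨ y = 9 ∨ y = 11 := by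
  obtain ⟨i, hw, hk⟩ := h
  fin_cases i <;> simp [Wset, Kset] at hw hk <;> omega

lemma gedge6 {y : ℕ} (h : Gedge 6 y) : y = 1 ∨ y = 2 ∨ y = 9 ∨ y = 11 := by
  obtain ⟨i, hw, hk⟩ := h
  fin_cases i <;> simp [Wset, Kset] at hw hk <;> omega

lemma gedge7 {y : ℕ} (h : Gedge 7 y) : y = 1 ∨ y = 2 ∨ y = 9 ∨ y = 11 := by
  obtain ⟨i, hw, hk⟩ := h
  fin_cases i <;> simp [Wset, Kset] at hw hk <;> omega

lemma gedge9 {y : ℕ} (h : Gedge 9 y) : y = 1 ∨ y = 3 ∨ y = 5 ∨ y = 7 := by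
  obtain ⟨i, hw, hk⟩ := h
  fin_cases i <;> simp [Wset, Kset] at hw hk <;> omega

lemma gedge10 {y : ℕ} (h : Gedge 10 y) : y = 1 ∨ y = 3 ∨ y = 5 ∨ y = 7 := by
  obtain ⟨i, hw, hk⟩ := h
  fin_cases i <;> simp [Wset, Kset] at hw hk <;> omega

lemma gedge11 {y : ℕ} (h : Gedge 11 y) : y = 1 ∨ y = 3 ∨ y = 5 ∨ y = 7 := by
  obtain ⟨i, hw, hk⟩ := h
  fin_cases i <;> simp [Wset, Kset] at hw hk <;> omega

/-- If the vertex set `T` of a directed cycle `v 0, v 1, …` (of length `k + 2 ≥ 2`, vertices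
distinct) in `G*` is an independent set of `G*ᵤ`, then `T = {2, 7, 10}` or `T = {3, 6, 11}`. -/
theorem directed_cycle_independent_in_Gu (k : ℕ) (v : Fin (k + 2) → ℕ)
    (hinj : Function.Injective v)
    (hcyc : ∀ i, Gedge (v i) (v (i + 1)))
    (hindep : ∀ a ∈ Finset.image v Finset.univ, ∀ b ∈ Finset.image v Finset.univ,
      ¬ Gu.Adj a b) :
    Finset.image v Finset.univ = ({2, 7, 10} : Finset ℕ) ∨
      Finset.image v Finset.univ = ({3, 6, 11} : Finset ℕ) := by
  set T := Finset.image v Finset.univ with hTdef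
  have hne : ∀ i : Fin (k + 2), v i ∈ T :=
    fun i => Finset.mem_image_of_mem v (Finset.mem_univ i)
  have hnadj : ∀ a ∈ T, ∀ b ∈ T, ¬ Gu.Adj a b := hindep
  -- every cycle vertex lies in {2,3,6,7,10,11}
  have hmem : ∀ x ∈ T, x = 2 ∨ x = 3 ∨ x = 6 ∨ x = 7 ∨ x = 10 ∨ x = 11 := by
    intro x hx
    obtain ⟨i, -, rfl⟩ := Finset.mem_image.mp hx
    have hprev := hcyc (i - 1)
    rw [sub_add_cancel] at hprev
    obtain ⟨j, -, hk⟩ := hprev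
    have hK : v i = 1 ∨ v i = 2 ∨ v i = 3 ∨ v i = 5 ∨ v i = 6 ∨ v i = 7 ∨
        v i = 9 ∨ v i = 10 ∨ v i = 11 := by
      fin_cases j <;> simp [Kset] at hk <;> omega
    have hno1 : v i ≠ 1 := by
      intro h
      have hy := hcyc i
      rw [h] at hy
      have h1T : (1 : ℕ) ∈ T := h ▸ hx
      have hyT := hne (i + 1)
      rcases gedge1 hy with h' | h' | h' | h' <;> rw [h'] at hyT
      · exact hnadj 1 h1T 5 hyT (adj' 1 5 (by decide))
      · exact hnadj 1 h1T 6 hyT (adj' 1 6 (by decide))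
      · exact hnadj 1 h1T 9 hyT (adj' 1 9 (by decide))
      · exact hnadj 1 h1T 10 hyT (adj' 1 10 (by decide))
    have hno5 : v i ≠ 5 := by
      intro h
      have hy := hcyc i
      rw [h] at hy
      have h5T : (5 : ℕ) ∈ T := h ▸ hx
      have hyT := hne (i + 1)
      rcases gedge5 hy with h' | h' | h' | h' <;> rw [h'] at hyT
      · exact hnadj 5 h5T 1 hyT (adj' 5 1 (by decide))
      · exact hnadj 5 h5T 2 hyT (adj' 5 2 (by decide))
      · exact hnadj 5 h5T 9 hyT (adj' 5 9 (by decide))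
      · exact hnadj 5 h5T 11 hyT (adj' 5 11 (by decide))
    have hno9 : v i ≠ 9 := by
      intro h
      have hy := hcyc i
      rw [h] at hy
      have h9T : (9 : ℕ) ∈ T := h ▸ hx
      have hyT := hne (i + 1)
      rcases gedge9 hy with h' | h' | h' | h' <;> rw [h'] at hyT
      · exact hnadj 9 h9T 1 hyT (adj' 9 1 (by decide))
      · exact hnadj 9 h9T 3 hyT (adj' 9 3 (by decide))
      · exact hnadj 9 h9T 5 hyT (adj' 9 5 (by decide))
      · exact hnadj 9 h9T 7 hyT (adj' 9 7 (by decide))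
    omega
  have hsucc : ∀ x ∈ T, ∃ y ∈ T, Gedge x y := by
    intro x hx
    obtain ⟨i, -, rfl⟩ := Finset.mem_image.mp hx
    exact ⟨v (i + 1), hne (i + 1), hcyc i⟩
  -- chase lemmas
  have h2 : 2 ∈ T → 10 ∈ T := by
    intro h
    obtain ⟨y, hyT, hy⟩ := hsucc 2 h
    rcases gedge2 hy with rfl | rfl | rfl | rfl
    · exact absurd (hmem 5 hyT) (by omega)
    · exact absurd (adj' 2 6 (by decide)) (hnadj 2 h 6 hyT)
    · exact absurd (hmem 9 hyT) (by omega)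
    · exact hyT
  have h10 : 10 ∈ T → 7 ∈ T := by
    intro h
    obtain ⟨y, hyT, hy⟩ := hsucc 10 h
    rcases gedge10 hy with rfl | rfl | rfl | rfl
    · exact absurd (hmem 1 hyT) (by omega)
    · exact absurd (adj' 10 3 (by decide)) (hnadj 10 h 3 hyT)
    · exact absurd (hmem 5 hyT) (by omega)
    · exact hyT
  have h7 : 7 ∈ T → 2 ∈ T := by
    intro h
    obtain ⟨y, hyT, hy⟩ := hsucc 7 h
    rcases gedge7 hy with rfl | rfl | rfl | rfl
    · exact absurd (hmem 1 hyT) (by omega)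
    · exact hyT
    · exact absurd (hmem 9 hyT) (by omega)
    · exact absurd (adj' 7 11 (by decide)) (hnadj 7 h 11 hyT)
  have h3 : 3 ∈ T → 6 ∈ T := by
    intro h
    obtain ⟨y, hyT, hy⟩ := hsucc 3 h
    rcases gedge3 hy with rfl | rfl | rfl | rfl
    · exact absurd (hmem 5 hyT) (by omega)
    · exact hyT
    · exact absurd (hmem 9 hyT) (by omega)
    · exact absurd (adj' 3 10 (by decide)) (hnadj 3 h 10 hyT)
  have h6 : 6 ∈ T → 11 ∈ T := by
    intro h
    obtain ⟨y, hyT, hy⟩ := hsucc 6 h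
    rcases gedge6 hy with rfl | rfl | rfl | rfl
    · exact absurd (hmem 1 hyT) (by omega)
    · exact absurd (adj' 6 2 (by decide)) (hnadj 6 h 2 hyT)
    · exact absurd (hmem 9 hyT) (by omega)
    · exact hyT
  have h11 : 11 ∈ T → 3 ∈ T := by
    intro h
    obtain ⟨y, hyT, hy⟩ := hsucc 11 h
    rcases gedge11 hy with rfl | rfl | rfl | rfl
    · exact absurd (hmem 1 hyT) (by omega)
    · exact hyT
    · exact absurd (hmem 5 hyT) (by omega)
    · exact absurd (adj' 11 7 (by decide)) (hnadj 11 h 7 hyT)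
  -- final assembly
  have final2 : 2 ∈ T → T = {2, 7, 10} := by
    intro h2'
    have h10' := h2 h2'
    have h7' := h10 h10'
    apply Finset.ext
    intro x
    simp only [Finset.mem_insert, Finset.mem_singleton]
    constructor
    · intro hx
      rcases hmem x hx with rfl | rfl | rfl | rfl | rfl | rfl
      · left; rfl
      · exact absurd (adj' 3 10 (by decide)) (hnadj 3 hx 10 h10')
      · exact absurd (adj' 2 6 (by decide)) (hnadj 2 h2' 6 hx)
      · right; left; rfl
      · right; right; rfl
      · exact absurd (adj' 7 11 (by decide)) (hnadj 7 h7' 11 hx)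
    · rintro (rfl | rfl | rfl) <;> assumption
  have final3 : 3 ∈ T → T = {3, 6, 11} := by
    intro h3'
    have h6' := h3 h3'
    have h11' := h6 h6'
    apply Finset.ext
    intro x
    simp only [Finset.mem_insert, Finset.mem_singleton]
    constructor
    · intro hx
      rcases hmem x hx with rfl | rfl | rfl | rfl | rfl | rfl
      · exact absurd (adj' 2 6 (by decide)) (hnadj 2 hx 6 h6')
      · left; rfl
      · right; left; rfl
      · exact absurd (adj' 7 11 (by decide)) (hnadj 7 hx 11 h11')
      · exact absurd (adj' 3 10 (by decide)) (hnadj 3 h3' 10 hx)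
      · right; right; rfl
    · rintro (rfl | rfl | rfl) <;> assumption
  have hv0 := hne 0
  rcases hmem _ hv0 with h | h | h | h | h | h
  · exact Or.inl (final2 (h ▸ hv0))
  · exact Or.inr (final3 (h ▸ hv0))
  · exact Or.inr (final3 (h11 (h6 (h ▸ hv0))))
  · exact Or.inl (final2 (h7 (h ▸ hv0)))
  · exact Or.inl (final2 (h7 (h10 (h ▸ hv0))))
  · exact Or.inr (final3 (h11 (h ▸ hv0)))
end

section
/- For any S ⊆ {1,…,12}, let I = {4,8,12} ∩ S. Then MAIS(G*_S) < α(G*_{S,u}) if and only if S = {2,7,10} ∪ I or S = {3,6,11} ∪ I, where G*_S is the subgraph of G* induced by S and G*_{S,u} is the subgraph of G*_u induced by S. -/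
/-- A directed cycle (of length `k + 2 ≥ 2`) with all its vertices in the finite set `S`,
in the directed graph with edge relation `E`: a sequence of distinct vertices
`v 0, v 1, …` with a directed edge from each vertex to the (cyclically) next one. -/
def HasDirCycleIn (E : ℕ → ℕ → Prop) (S : Finset ℕ) : Prop :=
  ∃ k : ℕ, ∃ v : Fin (k + 2) → ℕ,
    Function.Injective v ∧ (∀ i, v i ∈ S) ∧ ∀ i, E (v i) (v (i + 1))

/-- `MAIS` of the subgraph induced by `S` of the directed graph with edge relation `E`:
the maximum cardinality of a subset `T ⊆ S` whose induced subgraph contains no directed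
cycle. -/
noncomputable def maisOn (E : ℕ → ℕ → Prop) (S : Finset ℕ) : ℕ :=
  sSup {n : ℕ | ∃ T : Finset ℕ, T ⊆ S ∧ T.card = n ∧ ¬ HasDirCycleIn E T}

/-- The independence number of the subgraph of `G` induced by the finite vertex set `S`:
the maximum cardinality of a set `T ⊆ S` of pairwise non-adjacent vertices. -/
noncomputable def alphaOn (G : SimpleGraph ℕ) (S : Finset ℕ) : ℕ :=
  sSup {n : ℕ | ∃ T : Finset ℕ, T ⊆ S ∧ T.card = n ∧ ∀ a ∈ T, ∀ b ∈ T, ¬ G.Adj a b}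

instance instDecGu : DecidableRel Gu.Adj := fun a b => by
  change Decidable (a ≠ b ∧ Gedge a b ∧ Gedge b a); infer_instance

/-- "No source": every vertex of `U` has an in-edge from within `U`. -/
def NoSrc (U : Finset ℕ) : Prop := ∀ x ∈ U, ∃ y ∈ U, Gedge y x

instance (U : Finset ℕ) : Decidable (NoSrc U) := by unfold NoSrc; infer_instance

/-- A witness of acyclicity: every nonempty subset has a source. -/
def AcycW (T : Finset ℕ) : Prop := ∀ U ∈ T.powerset, U.Nonempty → ¬ NoSrc U

instance (T : Finset ℕ) : Decidable (AcycW T) := by unfold AcycW; infer_instance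

lemma AcycW.mono {T T' : Finset ℕ} (h : AcycW T) (hsub : T' ⊆ T) : AcycW T' :=
  fun U hU hne => h U (Finset.mem_powerset.mpr ((Finset.mem_powerset.mp hU).trans hsub)) hne

lemma AcycW.noCycle {T : Finset ℕ} (h : AcycW T) : ¬ HasDirCycleIn Gedge T := by
  rintro ⟨k, v, hinj, hmem, hedge⟩
  refine h (Finset.univ.image v) (Finset.mem_powerset.mpr ?_)
    ⟨v 0, Finset.mem_image_of_mem v (Finset.mem_univ 0)⟩ ?_
  · intro x hx
    obtain ⟨i, _, rfl⟩ := Finset.mem_image.mp hx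
    exact hmem i
  · intro x hx
    obtain ⟨i, _, rfl⟩ := Finset.mem_image.mp hx
    refine ⟨v (i - 1), Finset.mem_image_of_mem v (Finset.mem_univ _), ?_⟩
    have := hedge (i - 1)
    rwa [sub_add_cancel] at this

/-! sSup bookkeeping -/

lemma mais_bdd (E : ℕ → ℕ → Prop) (S : Finset ℕ) :
    BddAbove {n : ℕ | ∃ T : Finset ℕ, T ⊆ S ∧ T.card = n ∧ ¬ HasDirCycleIn E T} := by
  refine ⟨S.card, ?_⟩
  rintro n ⟨T, hT, rfl, _⟩
  exact Finset.card_le_card hT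

lemma mais_zero_mem (E : ℕ → ℕ → Prop) (S : Finset ℕ) :
    (0 : ℕ) ∈ {n : ℕ | ∃ T : Finset ℕ, T ⊆ S ∧ T.card = n ∧ ¬ HasDirCycleIn E T} := by
  refine ⟨∅, Finset.empty_subset S, Finset.card_empty, ?_⟩
  rintro ⟨k, v, _, hmem, _⟩
  exact absurd (hmem 0) (Finset.notMem_empty _)

lemma le_mais {E : ℕ → ℕ → Prop} {S T : Finset ℕ} (hT : T ⊆ S)
    (h : ¬ HasDirCycleIn E T) : T.card ≤ maisOn E S :=
  le_csSup (mais_bdd E S) ⟨T, hT, rfl, h⟩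

lemma mais_le {E : ℕ → ℕ → Prop} {S : Finset ℕ} {n : ℕ}
    (h : ∀ T : Finset ℕ, T ⊆ S → ¬ HasDirCycleIn E T → T.card ≤ n) : maisOn E S ≤ n := by
  refine csSup_le ⟨0, mais_zero_mem E S⟩ ?_
  rintro m ⟨T, hT, rfl, hc⟩
  exact h T hT hc

lemma alpha_bdd (G : SimpleGraph ℕ) (S : Finset ℕ) :
    BddAbove {n : ℕ | ∃ T : Finset ℕ, T ⊆ S ∧ T.card = n ∧ ∀ a ∈ T, ∀ b ∈ T, ¬ G.Adj a b} := by
  refine ⟨S.card, ?_⟩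
  rintro n ⟨T, hT, rfl, _⟩
  exact Finset.card_le_card hT

lemma le_alpha {G : SimpleGraph ℕ} {S T : Finset ℕ} (hT : T ⊆ S)
    (h : ∀ a ∈ T, ∀ b ∈ T, ¬ G.Adj a b) : T.card ≤ alphaOn G S :=
  le_csSup (alpha_bdd G S) ⟨T, hT, rfl, h⟩

lemma alpha_attain (G : SimpleGraph ℕ) (S : Finset ℕ) :
    ∃ T : Finset ℕ, T ⊆ S ∧ T.card = alphaOn G S ∧ ∀ a ∈ T, ∀ b ∈ T, ¬ G.Adj a b := by
  have hne : {n : ℕ | ∃ T : Finset ℕ, T ⊆ S ∧ T.card = n ∧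
      ∀ a ∈ T, ∀ b ∈ T, ¬ G.Adj a b}.Nonempty :=
    ⟨0, ∅, Finset.empty_subset S, Finset.card_empty, fun a ha => absurd ha (Finset.notMem_empty a)⟩
  obtain ⟨T, hT, hcard, hind⟩ := Nat.sSup_mem hne (alpha_bdd G S)
  exact ⟨T, hT, hcard, hind⟩

/-! Small decidable facts -/

lemma K_sub_core : ∀ i : Fin 3, Kset i ⊆ ({1,2,3,5,6,7,9,10,11} : Finset ℕ) := by decide

lemma noSrc_sub_core {U : Finset ℕ} (h : NoSrc U) :
    U ⊆ ({1,2,3,5,6,7,9,10,11} : Finset ℕ) := by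
  intro x hx
  obtain ⟨y, _, i, _, hk⟩ := h x hx
  exact K_sub_core i hk

set_option maxRecDepth 10000 in
lemma classify : ∀ U ∈ (({1,2,3,5,6,7,9,10,11} : Finset ℕ)).powerset, U.Nonempty →
    (∀ a ∈ U, ∀ b ∈ U, ¬ Gu.Adj a b) → NoSrc U →
    U = ({2,7,10} : Finset ℕ) ∨ U = ({3,6,11} : Finset ℕ) := by decide

lemma extendA : ∀ x ∈ Finset.Icc 1 12, x ∉ ({2,7,10} : Finset ℕ) →
    x ∉ ({4,8,12} : Finset ℕ) → (Gu.Adj x 2 ∨ Gu.Adj x 7 ∨ Gu.Adj x 10) := by decide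

lemma extendB : ∀ x ∈ Finset.Icc 1 12, x ∉ ({3,6,11} : Finset ℕ) →
    x ∉ ({4,8,12} : Finset ℕ) → (Gu.Adj x 3 ∨ Gu.Adj x 6 ∨ Gu.Adj x 11) := by decide

lemma zcasesA : ∀ z ∈ Finset.Icc 1 12, z ∉ ({2,7,10} : Finset ℕ) →
    z ∉ ({4,8,12} : Finset ℕ) → z ∈ ({1,3,5,6,9,11} : Finset ℕ) := by decide

lemma zcasesB : ∀ z ∈ Finset.Icc 1 12, z ∉ ({3,6,11} : Finset ℕ) →
    z ∉ ({4,8,12} : Finset ℕ) → z ∈ ({1,2,5,7,9,10} : Finset ℕ) := by decide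

lemma indepA : ∀ a ∈ ({2,7,10,4,8,12} : Finset ℕ), ∀ b ∈ ({2,7,10,4,8,12} : Finset ℕ),
    ¬ Gu.Adj a b := by decide

lemma indepB : ∀ a ∈ ({3,6,11,4,8,12} : Finset ℕ), ∀ b ∈ ({3,6,11,4,8,12} : Finset ℕ),
    ¬ Gu.Adj a b := by decide

/-- The repair step: an explicit acyclic set of size `3 + |{4,8,12} ∩ S|` inside `S`. -/
lemma repair_step (S : Finset ℕ) (z a₁ a₂ : ℕ)
    (hz : z ∈ S) (h1 : a₁ ∈ S) (h2 : a₂ ∈ S)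
    (hzF : z ∉ ({4,8,12} : Finset ℕ)) (h1F : a₁ ∉ ({4,8,12} : Finset ℕ))
    (h2F : a₂ ∉ ({4,8,12} : Finset ℕ))
    (hne1 : z ≠ a₁) (hne2 : z ≠ a₂) (hne3 : a₁ ≠ a₂)
    (hac : AcycW (({z,a₁,a₂} : Finset ℕ) ∪ ({4,8,12} : Finset ℕ))) :
    3 + (({4,8,12} : Finset ℕ) ∩ S).card ≤ maisOn Gedge S := by
  have hsubS : ({z,a₁,a₂} : Finset ℕ) ∪ (({4,8,12} : Finset ℕ) ∩ S) ⊆ S := by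
    refine Finset.union_subset ?_ Finset.inter_subset_right
    intro x hx
    simp only [Finset.mem_insert, Finset.mem_singleton] at hx
    rcases hx with rfl | rfl | rfl <;> assumption
  have hsub2 : ({z,a₁,a₂} : Finset ℕ) ∪ (({4,8,12} : Finset ℕ) ∩ S) ⊆
      ({z,a₁,a₂} : Finset ℕ) ∪ ({4,8,12} : Finset ℕ) :=
    Finset.union_subset_union_right Finset.inter_subset_left
  have hdisj : Disjoint ({z,a₁,a₂} : Finset ℕ) (({4,8,12} : Finset ℕ) ∩ S) := by
    rw [Finset.disjoint_left]
    intro x hx hxF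
    have hxF' := Finset.mem_of_mem_inter_left hxF
    simp only [Finset.mem_insert, Finset.mem_singleton] at hx
    rcases hx with rfl | rfl | rfl
    · exact hzF hxF'
    · exact h1F hxF'
    · exact h2F hxF'
  have hcard3 : ({z,a₁,a₂} : Finset ℕ).card = 3 := by
    rw [Finset.card_insert_of_notMem, Finset.card_insert_of_notMem, Finset.card_singleton]
    · simpa using hne3
    · simp only [Finset.mem_insert, Finset.mem_singleton]
      push_neg
      exact ⟨hne1, hne2⟩
  have hcard : (({z,a₁,a₂} : Finset ℕ) ∪ (({4,8,12} : Finset ℕ) ∩ S)).card =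
      3 + (({4,8,12} : Finset ℕ) ∩ S).card := by
    rw [Finset.card_union_of_disjoint hdisj, hcard3]
  rw [← hcard]
  exact le_mais hsubS (hac.mono hsub2).noCycle

lemma stepA (S : Finset ℕ) (hS : S ⊆ Finset.Icc 1 12)
    (h2S : (2:ℕ) ∈ S) (h7S : (7:ℕ) ∈ S) (h10S : (10:ℕ) ∈ S)
    (z : ℕ) (hzS : z ∈ S) (hzA : z ∉ ({2,7,10} : Finset ℕ)) (hzF : z ∉ ({4,8,12} : Finset ℕ)) :
    3 + (({4,8,12} : Finset ℕ) ∩ S).card ≤ maisOn Gedge S := by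
  have hzmem := zcasesA z (hS hzS) hzA hzF
  fin_cases hzmem
  · exact repair_step S 1 2 7 hzS h2S h7S (by decide) (by decide) (by decide)
      (by decide) (by decide) (by decide) (by decide)
  · exact repair_step S 3 2 7 hzS h2S h7S (by decide) (by decide) (by decide)
      (by decide) (by decide) (by decide) (by decide)
  · exact repair_step S 5 7 10 hzS h7S h10S (by decide) (by decide) (by decide)
      (by decide) (by decide) (by decide) (by decide)
  · exact repair_step S 6 7 10 hzS h7S h10S (by decide) (by decide) (by decide)
      (by decide) (by decide) (by decide) (by decide)
  · exact repair_step S 9 2 10 hzS h2S h10S (by decide) (by decide) (by decide)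
      (by decide) (by decide) (by decide) (by decide)
  · exact repair_step S 11 2 10 hzS h2S h10S (by decide) (by decide) (by decide)
      (by decide) (by decide) (by decide) (by decide)

lemma stepB (S : Finset ℕ) (hS : S ⊆ Finset.Icc 1 12)
    (h3S : (3:ℕ) ∈ S) (h6S : (6:ℕ) ∈ S) (h11S : (11:ℕ) ∈ S)
    (z : ℕ) (hzS : z ∈ S) (hzA : z ∉ ({3,6,11} : Finset ℕ)) (hzF : z ∉ ({4,8,12} : Finset ℕ)) :
    3 + (({4,8,12} : Finset ℕ) ∩ S).card ≤ maisOn Gedge S := by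
  have hzmem := zcasesB z (hS hzS) hzA hzF
  fin_cases hzmem
  · exact repair_step S 1 3 11 hzS h3S h11S (by decide) (by decide) (by decide)
      (by decide) (by decide) (by decide) (by decide)
  · exact repair_step S 2 3 11 hzS h3S h11S (by decide) (by decide) (by decide)
      (by decide) (by decide) (by decide) (by decide)
  · exact repair_step S 5 3 6 hzS h3S h6S (by decide) (by decide) (by decide)
      (by decide) (by decide) (by decide) (by decide)
  · exact repair_step S 7 3 6 hzS h3S h6S (by decide) (by decide) (by decide)
      (by decide) (by decide) (by decide) (by decide)
  · exact repair_step S 9 6 11 hzS h6S h11S (by decide) (by decide) (by decide)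
      (by decide) (by decide) (by decide) (by decide)
  · exact repair_step S 10 6 11 hzS h6S h11S (by decide) (by decide) (by decide)
      (by decide) (by decide) (by decide) (by decide)

/-- The easy direction, abstracted. -/
lemma easy_aux (S big : Finset ℕ) (hSsub : S ⊆ big)
    (hind : ∀ a ∈ big, ∀ b ∈ big, ¬ Gu.Adj a b)
    (hcyc : HasDirCycleIn Gedge S) (h0 : 0 < S.card) :
    maisOn Gedge S < alphaOn Gu S := by
  have hα : S.card ≤ alphaOn Gu S :=
    le_alpha (Finset.Subset.refl S) (fun a ha b hb => hind a (hSsub ha) b (hSsub hb))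
  have hm : maisOn Gedge S ≤ S.card - 1 := by
    refine mais_le ?_
    intro T hT hnc
    have hne : T ≠ S := by
      rintro rfl
      exact hnc hcyc
    exact Nat.le_sub_one_of_lt (Finset.card_lt_card (lt_of_le_of_ne hT hne))
  calc maisOn Gedge S ≤ S.card - 1 := hm
    _ < S.card := Nat.sub_lt h0 one_pos
    _ ≤ alphaOn Gu S := hα

lemma cyc3 (S : Finset ℕ) (a b c : ℕ) (ha : a ∈ S) (hb : b ∈ S) (hc : c ∈ S)
    (hinj : Function.Injective ![a, b, c])
    (e1 : Gedge a b) (e2 : Gedge b c) (e3 : Gedge c a) :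
    HasDirCycleIn Gedge S := by
  refine ⟨1, ![a, b, c], hinj, ?_, ?_⟩
  · intro i
    fin_cases i <;> simpa using ‹_›
  · intro i
    fin_cases i <;> simpa using ‹_›

/-- The hard direction: if `S` is not one of the special sets, `α ≤ MAIS`. -/
lemma hard (S : Finset ℕ) (hS : S ⊆ Finset.Icc 1 12)
    (h1 : S ≠ {2, 7, 10} ∪ (({4, 8, 12} : Finset ℕ) ∩ S))
    (h2 : S ≠ {3, 6, 11} ∪ (({4, 8, 12} : Finset ℕ) ∩ S)) :
    alphaOn Gu S ≤ maisOn Gedge S := by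
  obtain ⟨T, hTS, hTcard, hTind⟩ := alpha_attain Gu S
  by_cases hA : AcycW T
  · rw [← hTcard]
    exact le_mais hTS hA.noCycle
  · unfold AcycW at hA
    push_neg at hA
    obtain ⟨U, hUpw, hUne, hUsrc⟩ := hA
    have hUT : U ⊆ T := Finset.mem_powerset.mp hUpw
    have hUcore : U ∈ (({1,2,3,5,6,7,9,10,11} : Finset ℕ)).powerset :=
      Finset.mem_powerset.mpr (noSrc_sub_core hUsrc)
    have hUind : ∀ a ∈ U, ∀ b ∈ U, ¬ Gu.Adj a b :=
      fun a ha b hb => hTind a (hUT ha) b (hUT hb)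
    have hTF_le : (({4,8,12} : Finset ℕ) ∩ T).card ≤ (({4,8,12} : Finset ℕ) ∩ S).card :=
      Finset.card_le_card (Finset.inter_subset_inter (Finset.Subset.refl _) hTS)
    rcases classify U hUcore hUne hUind hUsrc with hU | hU
    · -- U = {2,7,10}
      have hAT : ({2,7,10} : Finset ℕ) ⊆ T := hU ▸ hUT
      have hAS : ({2,7,10} : Finset ℕ) ⊆ S := hAT.trans hTS
      have hTsub : T ⊆ ({2,7,10} : Finset ℕ) ∪ ({4,8,12} : Finset ℕ) := by
        intro x hx
        by_contra hmem
        simp only [Finset.mem_union, not_or] at hmem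
        have hxI := hS (hTS hx)
        rcases extendA x hxI hmem.1 hmem.2 with h | h | h
        · exact hTind x hx 2 (hAT (by decide)) h
        · exact hTind x hx 7 (hAT (by decide)) h
        · exact hTind x hx 10 (hAT (by decide)) h
      have hTeq : T = ({2,7,10} : Finset ℕ) ∪ (({4,8,12} : Finset ℕ) ∩ T) := by
        apply Finset.Subset.antisymm
        · intro x hx
          rcases Finset.mem_union.mp (hTsub hx) with h | h
          · exact Finset.mem_union_left _ h
          · exact Finset.mem_union_right _ (Finset.mem_inter.mpr ⟨h, hx⟩)
        · exact Finset.union_subset hAT Finset.inter_subset_right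
      have hdisj : Disjoint ({2,7,10} : Finset ℕ) (({4,8,12} : Finset ℕ) ∩ T) := by
        rw [Finset.disjoint_left]
        intro x hx hxF
        have hxF' := Finset.mem_of_mem_inter_left hxF
        fin_cases hx <;> exact absurd hxF' (by decide)
      have hTcard' : T.card = 3 + (({4,8,12} : Finset ℕ) ∩ T).card := by
        conv_lhs => rw [hTeq]
        rw [Finset.card_union_of_disjoint hdisj]
        norm_num
      have hsubS : ({2,7,10} : Finset ℕ) ∪ (({4,8,12} : Finset ℕ) ∩ S) ⊆ S :=
        Finset.union_subset hAS Finset.inter_subset_right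
      obtain ⟨z, hzS, hznot⟩ :=
        Finset.exists_of_ssubset (lt_of_le_of_ne hsubS (Ne.symm h1))
      simp only [Finset.mem_union, not_or] at hznot
      have hzF : z ∉ ({4,8,12} : Finset ℕ) :=
        fun h => hznot.2 (Finset.mem_inter.mpr ⟨h, hzS⟩)
      have hstep := stepA S hS (hAS (by decide)) (hAS (by decide)) (hAS (by decide))
        z hzS hznot.1 hzF
      calc alphaOn Gu S = T.card := hTcard.symm
        _ = 3 + (({4,8,12} : Finset ℕ) ∩ T).card := hTcard'
        _ ≤ 3 + (({4,8,12} : Finset ℕ) ∩ S).card := by omega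
        _ ≤ maisOn Gedge S := hstep
    · -- U = {3,6,11}
      have hAT : ({3,6,11} : Finset ℕ) ⊆ T := hU ▸ hUT
      have hAS : ({3,6,11} : Finset ℕ) ⊆ S := hAT.trans hTS
      have hTsub : T ⊆ ({3,6,11} : Finset ℕ) ∪ ({4,8,12} : Finset ℕ) := by
        intro x hx
        by_contra hmem
        simp only [Finset.mem_union, not_or] at hmem
        have hxI := hS (hTS hx)
        rcases extendB x hxI hmem.1 hmem.2 with h | h | h
        · exact hTind x hx 3 (hAT (by decide)) h
        · exact hTind x hx 6 (hAT (by decide)) h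
        · exact hTind x hx 11 (hAT (by decide)) h
      have hTeq : T = ({3,6,11} : Finset ℕ) ∪ (({4,8,12} : Finset ℕ) ∩ T) := by
        apply Finset.Subset.antisymm
        · intro x hx
          rcases Finset.mem_union.mp (hTsub hx) with h | h
          · exact Finset.mem_union_left _ h
          · exact Finset.mem_union_right _ (Finset.mem_inter.mpr ⟨h, hx⟩)
        · exact Finset.union_subset hAT Finset.inter_subset_right
      have hdisj : Disjoint ({3,6,11} : Finset ℕ) (({4,8,12} : Finset ℕ) ∩ T) := by
        rw [Finset.disjoint_left]
        intro x hx hxF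
        have hxF' := Finset.mem_of_mem_inter_left hxF
        fin_cases hx <;> exact absurd hxF' (by decide)
      have hTcard' : T.card = 3 + (({4,8,12} : Finset ℕ) ∩ T).card := by
        conv_lhs => rw [hTeq]
        rw [Finset.card_union_of_disjoint hdisj]
        norm_num
      have hsubS : ({3,6,11} : Finset ℕ) ∪ (({4,8,12} : Finset ℕ) ∩ S) ⊆ S :=
        Finset.union_subset hAS Finset.inter_subset_right
      obtain ⟨z, hzS, hznot⟩ :=
        Finset.exists_of_ssubset (lt_of_le_of_ne hsubS (Ne.symm h2))
      simp only [Finset.mem_union, not_or] at hznot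
      have hzF : z ∉ ({4,8,12} : Finset ℕ) :=
        fun h => hznot.2 (Finset.mem_inter.mpr ⟨h, hzS⟩)
      have hstep := stepB S hS (hAS (by decide)) (hAS (by decide)) (hAS (by decide))
        z hzS hznot.1 hzF
      calc alphaOn Gu S = T.card := hTcard.symm
        _ = 3 + (({4,8,12} : Finset ℕ) ∩ T).card := hTcard'
        _ ≤ 3 + (({4,8,12} : Finset ℕ) ∩ S).card := by omega
        _ ≤ maisOn Gedge S := hstep

theorem mais_lt_alpha_iff (S : Finset ℕ) (hS : S ⊆ Finset.Icc 1 12) :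
    maisOn Gedge S < alphaOn Gu S ↔
      (S = {2, 7, 10} ∪ (({4, 8, 12} : Finset ℕ) ∩ S) ∨
        S = {3, 6, 11} ∪ (({4, 8, 12} : Finset ℕ) ∩ S)) := by
  constructor
  · intro hlt
    by_contra hnot
    push_neg at hnot
    exact absurd hlt (not_lt.mpr (hard S hS hnot.1 hnot.2))
  · rintro (h | h)
    · have hAS : ({2,7,10} : Finset ℕ) ⊆ S := by
        rw [h]; exact Finset.subset_union_left
      have hSsub : S ⊆ ({2,7,10,4,8,12} : Finset ℕ) := by
        intro x hx
        rw [h] at hx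
        rcases Finset.mem_union.mp hx with hx | hx
        · fin_cases hx <;> decide
        · have hx' := Finset.mem_of_mem_inter_left hx
          fin_cases hx' <;> decide
      refine easy_aux S _ hSsub indepA ?_ ?_
      · exact cyc3 S 2 10 7 (hAS (by decide)) (hAS (by decide)) (hAS (by decide))
          (by decide) (by decide) (by decide) (by decide)
      · exact Finset.card_pos.mpr ⟨2, hAS (by decide)⟩
    · have hAS : ({3,6,11} : Finset ℕ) ⊆ S := by
        rw [h]; exact Finset.subset_union_left
      have hSsub : S ⊆ ({3,6,11,4,8,12} : Finset ℕ) := by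
        intro x hx
        rw [h] at hx
        rcases Finset.mem_union.mp hx with hx | hx
        · fin_cases hx <;> decide
        · have hx' := Finset.mem_of_mem_inter_left hx
          fin_cases hx' <;> decide
      refine easy_aux S _ hSsub indepB ?_ ?_
      · exact cyc3 S 3 6 11 (hAS (by decide)) (hAS (by decide)) (hAS (by decide))
          (by decide) (by decide) (by decide) (by decide)
      · exact Finset.card_pos.mpr ⟨3, hAS (by decide)⟩
end

section
/- If S ⊆ {1,…,12} is such that MAIS(G*_S) < α(G*_{S,u}), then S is an independent set of G*_u, and consequently the clique cover number of G*_{S,u} equals |S|. -/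
/-- The clique cover number of the subgraph of `G` induced by the finite vertex set `S`:
the minimum number of cliques (contained in `S`) needed to cover all vertices of `S`. -/
noncomputable def cliqueCoverOn (G : SimpleGraph ℕ) (S : Finset ℕ) : ℕ :=
  sInf {n : ℕ | ∃ C : Fin n → Finset ℕ,
    (∀ i, ↑(C i) ⊆ (S : Set ℕ) ∧ G.IsClique (C i)) ∧ ∀ v ∈ S, ∃ i, v ∈ C i}


instance (a b : ℕ) : Decidable (Gedge a b) := by unfold Gedge; exact inferInstance

lemma Gu_adj_iff (a b : ℕ) : Gu.Adj a b ↔ a ≠ b ∧ Gedge a b ∧ Gedge b a := Iff.rfl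

instance : DecidableRel Gu.Adj := fun a b => decidable_of_iff _ (Gu_adj_iff a b).symm

lemma gedge_decode (a b : ℕ) (h : Gedge a b) :
    ((a=1∨a=2∨a=3∨a=4) ∧ (b=5∨b=6∨b=9∨b=10)) ∨
    ((a=5∨a=6∨a=7∨a=8) ∧ (b=1∨b=2∨b=9∨b=11)) ∨
    ((a=9∨a=10∨a=11∨a=12) ∧ (b=1∨b=3∨b=5∨b=7)) := by
  obtain ⟨i, hW, hK⟩ := h
  fin_cases i <;> simp [Wset, Kset] at hW hK <;> omega

lemma adj_cases (a b : ℕ) (h : Gu.Adj a b) :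
    ((a=1∨a=2)∧(b=5∨b=6)) ∨ ((b=1∨b=2)∧(a=5∨a=6)) ∨ ((a=1∨a=3)∧(b=9∨b=10)) ∨
    ((b=1∨b=3)∧(a=9∨a=10)) ∨ ((a=5∨a=7)∧(b=9∨b=11)) ∨ ((b=5∨b=7)∧(a=9∨a=11)) := by
  have key : ∀ a ∈ Finset.Icc 1 12, ∀ b ∈ Finset.Icc 1 12, ¬ (a ≠ b ∧ Gedge a b ∧ Gedge b a) ∨
      (((a=1∨a=2)∧(b=5∨b=6)) ∨ ((b=1∨b=2)∧(a=5∨a=6)) ∨ ((a=1∨a=3)∧(b=9∨b=10)) ∨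
      ((b=1∨b=3)∧(a=9∨a=10)) ∨ ((a=5∨a=7)∧(b=9∨b=11)) ∨ ((b=5∨b=7)∧(a=9∨a=11))) := by decide
  obtain ⟨hne, h1, h2⟩ := h
  have ha : a ∈ Finset.Icc 1 12 := by
    have := gedge_decode a b h1
    simp [Finset.mem_Icc]; omega
  have hb : b ∈ Finset.Icc 1 12 := by
    have := gedge_decode b a h2
    simp [Finset.mem_Icc]; omega
  exact (key a ha b hb).resolve_left (fun hc => hc ⟨hne, h1, h2⟩)

lemma L2 (T : Finset ℕ) (hT : T ⊆ Finset.Icc 1 12)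
    (hind : ∀ a ∈ T, ∀ b ∈ T, ¬ Gu.Adj a b)
    (hcyc : HasDirCycleIn Gedge T) :
    (3 ∈ T ∧ 6 ∈ T ∧ 11 ∈ T) ∨ (2 ∈ T ∧ 7 ∈ T ∧ 10 ∈ T) := by
  obtain ⟨k, v, -, hmem, hedge⟩ := hcyc
  set P : ℕ → Prop := fun u => ∃ i, v i = u with hPdef
  have hPT : ∀ u, P u → u ∈ T := by rintro u ⟨i, rfl⟩; exact hmem i
  have hsucc : ∀ u, P u → ∃ w, P w ∧ Gedge u w := by
    rintro u ⟨i, rfl⟩; exact ⟨v (i+1), ⟨i+1, rfl⟩, hedge i⟩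
  have hpred : ∀ u, P u → ∃ w, P w ∧ Gedge w u := by
    rintro u ⟨i, rfl⟩
    refine ⟨v (i-1), ⟨i-1, rfl⟩, ?_⟩
    have h := hedge (i-1)
    rwa [sub_add_cancel] at h
  have hni : ∀ a b : ℕ, P a → P b → ¬ (a ≠ b ∧ Gedge a b ∧ Gedge b a) :=
    fun a b ha hb hadj => hind a (hPT a ha) b (hPT b hb) hadj
  have hPval : ∀ u, P u → u=1∨u=2∨u=3∨u=5∨u=6∨u=7∨u=9∨u=10∨u=11 := by
    intro u hu
    obtain ⟨w, _, he⟩ := hpred u hu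
    rcases gedge_decode w u he with ⟨-, hh⟩ | ⟨-, hh⟩ | ⟨-, hh⟩ <;> omega
  have hnP1 : ¬ P 1 := by
    intro h1
    obtain ⟨x, hx, he⟩ := hsucc 1 h1
    have hx' : x = 5 ∨ x = 6 ∨ x = 9 ∨ x = 10 := by
      rcases gedge_decode 1 x he with ⟨-,hh⟩|⟨hh,-⟩|⟨hh,-⟩ <;> omega
    rcases hx' with rfl|rfl|rfl|rfl <;> exact hni 1 _ h1 hx (by decide)
  have hnP5 : ¬ P 5 := by
    intro h5
    obtain ⟨x, hx, he⟩ := hsucc 5 h5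
    have hx' : x = 1 ∨ x = 2 ∨ x = 9 ∨ x = 11 := by
      rcases gedge_decode 5 x he with ⟨hh,-⟩|⟨-,hh⟩|⟨hh,-⟩ <;> omega
    rcases hx' with rfl|rfl|rfl|rfl
    · exact hnP1 hx
    · exact hni 5 _ h5 hx (by decide)
    · exact hni 5 _ h5 hx (by decide)
    · exact hni 5 _ h5 hx (by decide)
  have hnP9 : ¬ P 9 := by
    intro h9
    obtain ⟨x, hx, he⟩ := hsucc 9 h9
    have hx' : x = 1 ∨ x = 3 ∨ x = 5 ∨ x = 7 := by
      rcases gedge_decode 9 x he with ⟨hh,-⟩|⟨hh,-⟩|⟨-,hh⟩ <;> omega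
    rcases hx' with rfl|rfl|rfl|rfl
    · exact hnP1 hx
    · exact hni 9 _ h9 hx (by decide)
    · exact hnP5 hx
    · exact hni 9 _ h9 hx (by decide)
  have hPval2 : ∀ u, P u → u=2∨u=3∨u=6∨u=7∨u=10∨u=11 := by
    intro u hu
    have hv := hPval u hu
    rcases hv with rfl|h'|h'|rfl|h'|h'|rfl|h'|h'
    · exact absurd hu hnP1
    · omega
    · omega
    · exact absurd hu hnP5
    · omega
    · omega
    · exact absurd hu hnP9
    · omega
    · omega
  -- forced predecessors
  have h63 : P 6 → P 3 := by
    intro h6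
    obtain ⟨w, hw, he⟩ := hpred 6 h6
    have hwv := hPval2 w hw
    have hw' : w = 2 ∨ w = 3 := by
      rcases gedge_decode w 6 he with ⟨hh,-⟩|⟨-,hh⟩|⟨-,hh⟩ <;> omega
    rcases hw' with rfl | rfl
    · exact absurd (by decide) (hni 2 6 hw h6)
    · exact hw
  have h311 : P 3 → P 11 := by
    intro h3
    obtain ⟨w, hw, he⟩ := hpred 3 h3
    have hwv := hPval2 w hw
    have hw' : w = 10 ∨ w = 11 := by
      rcases gedge_decode w 3 he with ⟨-,hh⟩|⟨-,hh⟩|⟨hh,-⟩ <;> omega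
    rcases hw' with rfl | rfl
    · exact absurd (by decide) (hni 10 3 hw h3)
    · exact hw
  have h116 : P 11 → P 6 := by
    intro h11
    obtain ⟨w, hw, he⟩ := hpred 11 h11
    have hwv := hPval2 w hw
    have hw' : w = 6 ∨ w = 7 := by
      rcases gedge_decode w 11 he with ⟨-,hh⟩|⟨hh,-⟩|⟨-,hh⟩ <;> omega
    rcases hw' with rfl | rfl
    · exact hw
    · exact absurd (by decide) (hni 7 11 hw h11)
  have h27 : P 2 → P 7 := by
    intro h2
    obtain ⟨w, hw, he⟩ := hpred 2 h2
    have hwv := hPval2 w hw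
    have hw' : w = 6 ∨ w = 7 := by
      rcases gedge_decode w 2 he with ⟨-,hh⟩|⟨hh,-⟩|⟨-,hh⟩ <;> omega
    rcases hw' with rfl | rfl
    · exact absurd (by decide) (hni 6 2 hw h2)
    · exact hw
  have h710 : P 7 → P 10 := by
    intro h7
    obtain ⟨w, hw, he⟩ := hpred 7 h7
    have hwv := hPval2 w hw
    have hw' : w = 10 ∨ w = 11 := by
      rcases gedge_decode w 7 he with ⟨-,hh⟩|⟨-,hh⟩|⟨hh,-⟩ <;> omega
    rcases hw' with rfl | rfl
    · exact hw
    · exact absurd (by decide) (hni 11 7 hw h7)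
  have h102 : P 10 → P 2 := by
    intro h10
    obtain ⟨w, hw, he⟩ := hpred 10 h10
    have hwv := hPval2 w hw
    have hw' : w = 2 ∨ w = 3 := by
      rcases gedge_decode w 10 he with ⟨hh,-⟩|⟨-,hh⟩|⟨-,hh⟩ <;> omega
    rcases hw' with rfl | rfl
    · exact hw
    · exact absurd (by decide) (hni 3 10 hw h10)
  have hP0 : P (v 0) := ⟨0, rfl⟩
  have h0 := hPval2 (v 0) hP0
  have triA : P 3 → (3 ∈ T ∧ 6 ∈ T ∧ 11 ∈ T) := by
    intro p3
    have p11 := h311 p3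
    have p6 := h116 p11
    exact ⟨hPT 3 p3, hPT 6 p6, hPT 11 p11⟩
  have triB : P 2 → (2 ∈ T ∧ 7 ∈ T ∧ 10 ∈ T) := by
    intro p2
    have p7 := h27 p2
    have p10 := h710 p7
    exact ⟨hPT 2 p2, hPT 7 p7, hPT 10 p10⟩
  rcases h0 with h'|h'|h'|h'|h'|h'
  · exact Or.inr (triB (h' ▸ hP0))
  · exact Or.inl (triA (h' ▸ hP0))
  · exact Or.inl (triA (h63 (h' ▸ hP0)))
  · exact Or.inr (triB (h102 (h710 (h' ▸ hP0))))
  · exact Or.inr (triB (h102 (h' ▸ hP0)))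
  · exact Or.inl (triA (h63 (h116 (h' ▸ hP0))))

lemma L1 (E : ℕ → ℕ → Prop) (U : Finset ℕ) (x : ℕ)
    (hU : ¬ HasDirCycleIn E U) (hx : ∀ y ∈ insert x U, ¬ E x y) :
    ¬ HasDirCycleIn E (insert x U) := by
  rintro ⟨k, v, hinj, hmem, hedge⟩
  by_cases hex : ∃ i, v i = x
  · obtain ⟨i, hi⟩ := hex
    exact hx (v (i+1)) (hmem (i+1)) (hi ▸ hedge i)
  · push_neg at hex
    exact hU ⟨k, v, hinj, fun i => (Finset.mem_insert.1 (hmem i)).resolve_left (hex i), hedge⟩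

lemma finish (S T : Finset ℕ) (x r : ℕ) (hTS : T ⊆ S) (hxS : x ∈ S) (hxT : x ∉ T) (hrT : r ∈ T)
    (hacy : ¬ HasDirCycleIn Gedge (T.erase r))
    (hnx : ∀ y ∈ insert x (T.erase r), ¬ Gedge x y) :
    T.card ≤ maisOn Gedge S := by
  have hxe : x ∉ T.erase r := fun hh => hxT (Finset.mem_of_mem_erase hh)
  have hsub : insert x (T.erase r) ⊆ S :=
    Finset.insert_subset hxS ((Finset.erase_subset r T).trans hTS)
  have hcard : (insert x (T.erase r)).card = T.card := by
    rw [Finset.card_insert_of_notMem hxe, Finset.card_erase_of_mem hrT]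
    have := Finset.card_pos.2 ⟨r, hrT⟩
    omega
  have hac := L1 Gedge (T.erase r) x hacy hnx
  have hbdd : BddAbove {n : ℕ | ∃ U : Finset ℕ, U ⊆ S ∧ U.card = n ∧ ¬ HasDirCycleIn Gedge U} :=
    ⟨S.card, by rintro n ⟨U, hU, rfl, -⟩; exact Finset.card_le_card hU⟩
  calc T.card = (insert x (T.erase r)).card := hcard.symm
    _ ≤ maisOn Gedge S := le_csSup hbdd ⟨_, hsub, rfl, hac⟩

theorem mais_lt_alpha_implies_independent (S : Finset ℕ) (hS : S ⊆ Finset.Icc 1 12)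
    (h : maisOn Gedge S < alphaOn Gu S) :
    (∀ a ∈ S, ∀ b ∈ S, ¬ Gu.Adj a b) ∧ cliqueCoverOn Gu S = S.card := by
  have hindep : ∀ a ∈ S, ∀ b ∈ S, ¬ Gu.Adj a b := by
    by_contra hcon
    push_neg at hcon
    obtain ⟨a, ha, b, hb, hab⟩ := hcon
    -- alphaOn is attained
    have bddA : BddAbove {n : ℕ | ∃ T : Finset ℕ, T ⊆ S ∧ T.card = n ∧
        ∀ a ∈ T, ∀ b ∈ T, ¬ Gu.Adj a b} :=
      ⟨S.card, by rintro n ⟨T, hT, rfl, -⟩; exact Finset.card_le_card hT⟩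
    have neA : {n : ℕ | ∃ T : Finset ℕ, T ⊆ S ∧ T.card = n ∧
        ∀ a ∈ T, ∀ b ∈ T, ¬ Gu.Adj a b}.Nonempty := ⟨0, ∅, by simp⟩
    obtain ⟨T, hTS, hTcard, hTind⟩ := Nat.sSup_mem neA bddA
    have hmais : ∀ T' : Finset ℕ, T' ⊆ S → ¬ HasDirCycleIn Gedge T' →
        T'.card ≤ maisOn Gedge S := by
      intro T' h1 h2
      have hbdd : BddAbove {n : ℕ | ∃ U : Finset ℕ, U ⊆ S ∧ U.card = n ∧
          ¬ HasDirCycleIn Gedge U} :=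
        ⟨S.card, by rintro n ⟨U, hU, rfl, -⟩; exact Finset.card_le_card hU⟩
      exact le_csSup hbdd ⟨T', h1, rfl, h2⟩
    have hTIcc : T ⊆ Finset.Icc 1 12 := hTS.trans hS
    by_cases hc : HasDirCycleIn Gedge T
    swap
    · have h2 := hmais T hTS hc
      rw [hTcard] at h2
      exact absurd h (not_lt.2 h2)
    rcases L2 T hTIcc hTind hc with ⟨m3, m6, m11⟩ | ⟨m2, m7, m10⟩
    · -- case A : T contains the triangle {3,6,11}
      have e1 : (1:ℕ) ∉ T := fun hh => hTind 1 hh 6 m6 (by decide)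
      have e2 : (2:ℕ) ∉ T := fun hh => hTind 2 hh 6 m6 (by decide)
      have e5 : (5:ℕ) ∉ T := fun hh => hTind 5 hh 11 m11 (by decide)
      have e7 : (7:ℕ) ∉ T := fun hh => hTind 7 hh 11 m11 (by decide)
      have e9 : (9:ℕ) ∉ T := fun hh => hTind 9 hh 3 m3 (by decide)
      have e10 : (10:ℕ) ∉ T := fun hh => hTind 10 hh 3 m3 (by decide)
      have hTsub : ∀ y ∈ T, y=3∨y=4∨y=6∨y=8∨y=11∨y=12 := by
        intro y hy
        have hy12 := Finset.mem_Icc.1 (hTIcc hy)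
        obtain ⟨hy1, hy2⟩ := hy12
        interval_cases y <;> first
          | tauto
          | exact absurd hy e1 | exact absurd hy e2 | exact absurd hy e5
          | exact absurd hy e7 | exact absurd hy e9 | exact absurd hy e10
      have hacy : ∀ r ∈ ({3,6,11} : Finset ℕ), ¬ HasDirCycleIn Gedge (T.erase r) := by
        intro r hr hcy
        have hsub : T.erase r ⊆ Finset.Icc 1 12 := (Finset.erase_subset r T).trans hTIcc
        have hind' : ∀ a ∈ T.erase r, ∀ b ∈ T.erase r, ¬ Gu.Adj a b :=
          fun a ha' b hb' => hTind a (Finset.mem_of_mem_erase ha') b (Finset.mem_of_mem_erase hb')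
        rcases L2 _ hsub hind' hcy with ⟨c3, c6, c11⟩ | ⟨c2, -, -⟩
        · simp only [Finset.mem_insert, Finset.mem_singleton] at hr
          rcases hr with rfl | rfl | rfl
          exacts [Finset.notMem_erase 3 T c3, Finset.notMem_erase 6 T c6,
            Finset.notMem_erase 11 T c11]
        · exact e2 (Finset.mem_of_mem_erase c2)
      -- an endpoint of the adjacent pair lying outside T
      have hex : ∃ x, x ∈ S ∧ (x=1∨x=2∨x=5∨x=7∨x=9∨x=10) := by
        rcases adj_cases a b hab with ⟨h1,-⟩|⟨h1,-⟩|⟨-,h1⟩|⟨-,h1⟩|⟨h1,-⟩|⟨h1,-⟩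
        exacts [⟨a, ha, by omega⟩, ⟨b, hb, by omega⟩, ⟨b, hb, by omega⟩,
          ⟨a, ha, by omega⟩, ⟨a, ha, by omega⟩, ⟨b, hb, by omega⟩]
      obtain ⟨x, hxS, hxv⟩ := hex
      have key : T.card ≤ maisOn Gedge S := by
        rcases hxv with rfl|rfl|rfl|rfl|rfl|rfl
        · -- x = 1, r = 6
          refine finish S T 1 6 hTS hxS e1 m6 (hacy 6 (by decide)) ?_
          intro y hy hE
          rcases Finset.mem_insert.1 hy with rfl | hy'
          · rcases gedge_decode _ _ hE with ⟨c1,c2⟩|⟨c1,c2⟩|⟨c1,c2⟩ <;> omega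
          · have hyv := hTsub y (Finset.mem_of_mem_erase hy')
            have hyne := (Finset.mem_erase.1 hy').1
            rcases gedge_decode _ _ hE with ⟨c1,c2⟩|⟨c1,c2⟩|⟨c1,c2⟩ <;> omega
        · -- x = 2, r = 6
          refine finish S T 2 6 hTS hxS e2 m6 (hacy 6 (by decide)) ?_
          intro y hy hE
          rcases Finset.mem_insert.1 hy with rfl | hy'
          · rcases gedge_decode _ _ hE with ⟨c1,c2⟩|⟨c1,c2⟩|⟨c1,c2⟩ <;> omega
          · have hyv := hTsub y (Finset.mem_of_mem_erase hy')
            have hyne := (Finset.mem_erase.1 hy').1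
            rcases gedge_decode _ _ hE with ⟨c1,c2⟩|⟨c1,c2⟩|⟨c1,c2⟩ <;> omega
        · -- x = 5, r = 11
          refine finish S T 5 11 hTS hxS e5 m11 (hacy 11 (by decide)) ?_
          intro y hy hE
          rcases Finset.mem_insert.1 hy with rfl | hy'
          · rcases gedge_decode _ _ hE with ⟨c1,c2⟩|⟨c1,c2⟩|⟨c1,c2⟩ <;> omega
          · have hyv := hTsub y (Finset.mem_of_mem_erase hy')
            have hyne := (Finset.mem_erase.1 hy').1
            rcases gedge_decode _ _ hE with ⟨c1,c2⟩|⟨c1,c2⟩|⟨c1,c2⟩ <;> omega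
        · -- x = 7, r = 11
          refine finish S T 7 11 hTS hxS e7 m11 (hacy 11 (by decide)) ?_
          intro y hy hE
          rcases Finset.mem_insert.1 hy with rfl | hy'
          · rcases gedge_decode _ _ hE with ⟨c1,c2⟩|⟨c1,c2⟩|⟨c1,c2⟩ <;> omega
          · have hyv := hTsub y (Finset.mem_of_mem_erase hy')
            have hyne := (Finset.mem_erase.1 hy').1
            rcases gedge_decode _ _ hE with ⟨c1,c2⟩|⟨c1,c2⟩|⟨c1,c2⟩ <;> omega
        · -- x = 9, r = 3
          refine finish S T 9 3 hTS hxS e9 m3 (hacy 3 (by decide)) ?_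
          intro y hy hE
          rcases Finset.mem_insert.1 hy with rfl | hy'
          · rcases gedge_decode _ _ hE with ⟨c1,c2⟩|⟨c1,c2⟩|⟨c1,c2⟩ <;> omega
          · have hyv := hTsub y (Finset.mem_of_mem_erase hy')
            have hyne := (Finset.mem_erase.1 hy').1
            rcases gedge_decode _ _ hE with ⟨c1,c2⟩|⟨c1,c2⟩|⟨c1,c2⟩ <;> omega
        · -- x = 10, r = 3
          refine finish S T 10 3 hTS hxS e10 m3 (hacy 3 (by decide)) ?_
          intro y hy hE
          rcases Finset.mem_insert.1 hy with rfl | hy'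
          · rcases gedge_decode _ _ hE with ⟨c1,c2⟩|⟨c1,c2⟩|⟨c1,c2⟩ <;> omega
          · have hyv := hTsub y (Finset.mem_of_mem_erase hy')
            have hyne := (Finset.mem_erase.1 hy').1
            rcases gedge_decode _ _ hE with ⟨c1,c2⟩|⟨c1,c2⟩|⟨c1,c2⟩ <;> omega
      rw [hTcard] at key
      exact absurd h (not_lt.2 key)
    · -- case B : T contains the triangle {2,7,10}
      have e1 : (1:ℕ) ∉ T := fun hh => hTind 1 hh 10 m10 (by decide)
      have e3 : (3:ℕ) ∉ T := fun hh => hTind 3 hh 10 m10 (by decide)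
      have e5 : (5:ℕ) ∉ T := fun hh => hTind 5 hh 2 m2 (by decide)
      have e6 : (6:ℕ) ∉ T := fun hh => hTind 6 hh 2 m2 (by decide)
      have e9 : (9:ℕ) ∉ T := fun hh => hTind 9 hh 7 m7 (by decide)
      have e11 : (11:ℕ) ∉ T := fun hh => hTind 11 hh 7 m7 (by decide)
      have hTsub : ∀ y ∈ T, y=2∨y=4∨y=7∨y=8∨y=10∨y=12 := by
        intro y hy
        have hy12 := Finset.mem_Icc.1 (hTIcc hy)
        obtain ⟨hy1, hy2⟩ := hy12
        interval_cases y <;> first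
          | tauto
          | exact absurd hy e1 | exact absurd hy e3 | exact absurd hy e5
          | exact absurd hy e6 | exact absurd hy e9 | exact absurd hy e11
      have hacy : ∀ r ∈ ({2,7,10} : Finset ℕ), ¬ HasDirCycleIn Gedge (T.erase r) := by
        intro r hr hcy
        have hsub : T.erase r ⊆ Finset.Icc 1 12 := (Finset.erase_subset r T).trans hTIcc
        have hind' : ∀ a ∈ T.erase r, ∀ b ∈ T.erase r, ¬ Gu.Adj a b :=
          fun a ha' b hb' => hTind a (Finset.mem_of_mem_erase ha') b (Finset.mem_of_mem_erase hb')
        rcases L2 _ hsub hind' hcy with ⟨-, c6, -⟩ | ⟨c2, c7, c10⟩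
        · exact e6 (Finset.mem_of_mem_erase c6)
        · simp only [Finset.mem_insert, Finset.mem_singleton] at hr
          rcases hr with rfl | rfl | rfl
          exacts [Finset.notMem_erase 2 T c2, Finset.notMem_erase 7 T c7,
            Finset.notMem_erase 10 T c10]
      have hex : ∃ x, x ∈ S ∧ (x=1∨x=3∨x=5∨x=6∨x=9∨x=11) := by
        rcases adj_cases a b hab with ⟨-,h1⟩|⟨-,h1⟩|⟨h1,-⟩|⟨h1,-⟩|⟨-,h1⟩|⟨-,h1⟩
        exacts [⟨b, hb, by omega⟩, ⟨a, ha, by omega⟩, ⟨a, ha, by omega⟩,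
          ⟨b, hb, by omega⟩, ⟨b, hb, by omega⟩, ⟨a, ha, by omega⟩]
      obtain ⟨x, hxS, hxv⟩ := hex
      have key : T.card ≤ maisOn Gedge S := by
        rcases hxv with rfl|rfl|rfl|rfl|rfl|rfl
        · -- x = 1, r = 10
          refine finish S T 1 10 hTS hxS e1 m10 (hacy 10 (by decide)) ?_
          intro y hy hE
          rcases Finset.mem_insert.1 hy with rfl | hy'
          · rcases gedge_decode _ _ hE with ⟨c1,c2⟩|⟨c1,c2⟩|⟨c1,c2⟩ <;> omega
          · have hyv := hTsub y (Finset.mem_of_mem_erase hy')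
            have hyne := (Finset.mem_erase.1 hy').1
            rcases gedge_decode _ _ hE with ⟨c1,c2⟩|⟨c1,c2⟩|⟨c1,c2⟩ <;> omega
        · -- x = 3, r = 10
          refine finish S T 3 10 hTS hxS e3 m10 (hacy 10 (by decide)) ?_
          intro y hy hE
          rcases Finset.mem_insert.1 hy with rfl | hy'
          · rcases gedge_decode _ _ hE with ⟨c1,c2⟩|⟨c1,c2⟩|⟨c1,c2⟩ <;> omega
          · have hyv := hTsub y (Finset.mem_of_mem_erase hy')
            have hyne := (Finset.mem_erase.1 hy').1
            rcases gedge_decode _ _ hE with ⟨c1,c2⟩|⟨c1,c2⟩|⟨c1,c2⟩ <;> omega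
        · -- x = 5, r = 2
          refine finish S T 5 2 hTS hxS e5 m2 (hacy 2 (by decide)) ?_
          intro y hy hE
          rcases Finset.mem_insert.1 hy with rfl | hy'
          · rcases gedge_decode _ _ hE with ⟨c1,c2⟩|⟨c1,c2⟩|⟨c1,c2⟩ <;> omega
          · have hyv := hTsub y (Finset.mem_of_mem_erase hy')
            have hyne := (Finset.mem_erase.1 hy').1
            rcases gedge_decode _ _ hE with ⟨c1,c2⟩|⟨c1,c2⟩|⟨c1,c2⟩ <;> omega
        · -- x = 6, r = 2
          refine finish S T 6 2 hTS hxS e6 m2 (hacy 2 (by decide)) ?_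
          intro y hy hE
          rcases Finset.mem_insert.1 hy with rfl | hy'
          · rcases gedge_decode _ _ hE with ⟨c1,c2⟩|⟨c1,c2⟩|⟨c1,c2⟩ <;> omega
          · have hyv := hTsub y (Finset.mem_of_mem_erase hy')
            have hyne := (Finset.mem_erase.1 hy').1
            rcases gedge_decode _ _ hE with ⟨c1,c2⟩|⟨c1,c2⟩|⟨c1,c2⟩ <;> omega
        · -- x = 9, r = 7
          refine finish S T 9 7 hTS hxS e9 m7 (hacy 7 (by decide)) ?_
          intro y hy hE
          rcases Finset.mem_insert.1 hy with rfl | hy'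
          · rcases gedge_decode _ _ hE with ⟨c1,c2⟩|⟨c1,c2⟩|⟨c1,c2⟩ <;> omega
          · have hyv := hTsub y (Finset.mem_of_mem_erase hy')
            have hyne := (Finset.mem_erase.1 hy').1
            rcases gedge_decode _ _ hE with ⟨c1,c2⟩|⟨c1,c2⟩|⟨c1,c2⟩ <;> omega
        · -- x = 11, r = 7
          refine finish S T 11 7 hTS hxS e11 m7 (hacy 7 (by decide)) ?_
          intro y hy hE
          rcases Finset.mem_insert.1 hy with rfl | hy'
          · rcases gedge_decode _ _ hE with ⟨c1,c2⟩|⟨c1,c2⟩|⟨c1,c2⟩ <;> omega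
          · have hyv := hTsub y (Finset.mem_of_mem_erase hy')
            have hyne := (Finset.mem_erase.1 hy').1
            rcases gedge_decode _ _ hE with ⟨c1,c2⟩|⟨c1,c2⟩|⟨c1,c2⟩ <;> omega
      rw [hTcard] at key
      exact absurd h (not_lt.2 key)
  refine ⟨hindep, ?_⟩
  -- clique cover number equals |S|
  have hmemcc : S.card ∈ {n : ℕ | ∃ C : Fin n → Finset ℕ,
      (∀ i, ↑(C i) ⊆ (S : Set ℕ) ∧ Gu.IsClique (C i)) ∧ ∀ v ∈ S, ∃ i, v ∈ C i} := by
    refine ⟨fun i => {(S.equivFin.symm i : ℕ)}, fun i => ⟨?_, ?_⟩, ?_⟩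
    · intro y hy
      simp only [Finset.coe_singleton, Set.mem_singleton_iff] at hy
      subst hy
      exact (S.equivFin.symm i).2
    · simp [SimpleGraph.isClique_iff]
    · intro v hv
      exact ⟨S.equivFin ⟨v, hv⟩, by simp⟩
  apply le_antisymm
  · exact Nat.sInf_le hmemcc
  · have hcc := Nat.sInf_mem (⟨S.card, hmemcc⟩ : Set.Nonempty _)
    obtain ⟨C, hC, hcov⟩ := hcc
    have hsub : S ⊆ Finset.univ.biUnion C := by
      intro v hv
      obtain ⟨i, hi⟩ := hcov v hv
      exact Finset.mem_biUnion.2 ⟨i, Finset.mem_univ i, hi⟩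
    have hcard1 : ∀ i, (C i).card ≤ 1 := by
      intro i
      apply Finset.card_le_one.2
      intro p hp q hq
      by_contra hne
      have hpS : p ∈ S := (hC i).1 hp
      have hqS : q ∈ S := (hC i).1 hq
      exact hindep p hpS q hqS ((hC i).2 hp hq hne)
    calc S.card ≤ (Finset.univ.biUnion C).card := Finset.card_le_card hsub
      _ ≤ ∑ i, (C i).card := Finset.card_biUnion_le
      _ ≤ ∑ _i : Fin (cliqueCoverOn Gu S), 1 := Finset.sum_le_sum (fun i _ => hcard1 i)
      _ = cliqueCoverOn Gu S := by simp
end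

section
/- MAIS(G*) = 7: the maximum cardinality of a subset S of {1,…,12} such that the subgraph of G* induced by S contains no directed cycle equals 7. -/
/-! ### Auxiliary material -/

instance inst_s9 (a b : ℕ) : Decidable (Gedge a b) := by unfold Gedge; infer_instance

/-- The nine vertices that can possibly lie on a directed cycle. -/
def Nset : Finset ℕ := {1, 2, 3, 5, 6, 7, 9, 10, 11}

/-- Existence of a directed 2- or 3-cycle inside `T`. -/
def Has23 (T : Finset ℕ) : Prop :=
  (∃ a ∈ T, ∃ b ∈ T, a ≠ b ∧ Gedge a b ∧ Gedge b a) ∨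
  (∃ a ∈ T, ∃ b ∈ T, ∃ c ∈ T, a ≠ b ∧ b ≠ c ∧ a ≠ c ∧
    Gedge a b ∧ Gedge b c ∧ Gedge c a)

instance (T : Finset ℕ) : Decidable (Has23 T) := by unfold Has23; infer_instance

set_option maxRecDepth 10000 in
lemma key5 : ∀ T ∈ Nset.powerset, T.card = 5 → Has23 T := by decide

lemma hasDirCycleIn_mono {E : ℕ → ℕ → Prop} {S T : Finset ℕ} (hST : S ⊆ T)
    (h : HasDirCycleIn E S) : HasDirCycleIn E T := by
  obtain ⟨k, v, hinj, hmem, hedge⟩ := h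
  exact ⟨k, v, hinj, fun i => hST (hmem i), hedge⟩

lemma has23_cycle {T : Finset ℕ} (h : Has23 T) : HasDirCycleIn Gedge T := by
  rcases h with ⟨a, ha, b, hb, hab, hE1, hE2⟩ | ⟨a, ha, b, hb, c, hc, hab, hbc, hac, hE1, hE2, hE3⟩
  · refine ⟨0, ![a, b], ?_, ?_, ?_⟩
    · intro i j hij
      fin_cases i <;> fin_cases j <;> simp_all
    · intro i; fin_cases i <;> simpa
    · intro i; fin_cases i <;> simpa
  · refine ⟨1, ![a, b, c], ?_, ?_, ?_⟩
    · intro i j hij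
      fin_cases i <;> fin_cases j <;> simp_all
    · intro i; fin_cases i <;> simpa
    · intro i; fin_cases i <;> simpa

/-- A potential function increasing along every edge inside `T` rules out directed cycles. -/
lemma noCycle_of_potential {E : ℕ → ℕ → Prop} {T : Finset ℕ} (f : ℕ → ℕ)
    (hf : ∀ a ∈ T, ∀ b ∈ T, E a b → f a < f b) : ¬ HasDirCycleIn E T := by
  rintro ⟨k, v, hinj, hmem, hedge⟩
  obtain ⟨j, -, hj⟩ := Finset.exists_max_image Finset.univ (fun i => f (v i))
    ⟨0, Finset.mem_univ 0⟩
  exact absurd (hj (j + 1) (Finset.mem_univ _))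
    (not_le.mpr (hf _ (hmem j) _ (hmem (j + 1)) (hedge j)))

/-- The acyclic 7-set witness. -/
def T7 : Finset ℕ := {2, 4, 8, 9, 10, 11, 12}

lemma T7_noCycle : ¬ HasDirCycleIn Gedge T7 := by
  apply noCycle_of_potential
    (fun n => if n = 8 then 0 else if n ∈ ({9, 10, 11} : Finset ℕ) then 2 else 1)
  decide

lemma upper {T : Finset ℕ} (hT : T ⊆ Finset.Icc 1 12) (hc : ¬ HasDirCycleIn Gedge T) :
    T.card ≤ 7 := by
  have hA : (T ∩ Nset).card ≤ 4 := by
    by_contra h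
    push_neg at h
    obtain ⟨B, hBsub, hBcard⟩ := Finset.exists_subset_card_eq h
    have hBN : B ⊆ Nset := hBsub.trans Finset.inter_subset_right
    have h23 : Has23 B := key5 B (Finset.mem_powerset.mpr hBN) hBcard
    exact hc (hasDirCycleIn_mono (hBsub.trans Finset.inter_subset_left) (has23_cycle h23))
  have hD : (T \ Nset).card ≤ 3 := by
    have hsub : T \ Nset ⊆ Finset.Icc 1 12 \ Nset :=
      Finset.sdiff_subset_sdiff hT (le_refl _)
    have : Finset.Icc 1 12 \ Nset = ({4, 8, 12} : Finset ℕ) := by decide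
    calc (T \ Nset).card ≤ (Finset.Icc 1 12 \ Nset).card := Finset.card_le_card hsub
      _ = 3 := by rw [this]; decide
  calc T.card = (T ∩ Nset).card + (T \ Nset).card :=
        (Finset.card_inter_add_card_sdiff T Nset).symm
    _ ≤ 4 + 3 := Nat.add_le_add hA hD
    _ = 7 := rfl

/-- `MAIS(G*) = 7`: the maximum cardinality of a subset `S` of `{1, …, 12}` whose induced
subgraph of `G*` contains no directed cycle equals `7`. -/
theorem mais_Gstar_eq_seven : maisOn Gedge (Finset.Icc 1 12) = 7 := by
  have h7 : 7 ∈ {n : ℕ | ∃ T : Finset ℕ, T ⊆ Finset.Icc 1 12 ∧ T.card = n ∧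
      ¬ HasDirCycleIn Gedge T} :=
    ⟨T7, by decide, by decide, T7_noCycle⟩
  have hub : ∀ n ∈ {n : ℕ | ∃ T : Finset ℕ, T ⊆ Finset.Icc 1 12 ∧ T.card = n ∧
      ¬ HasDirCycleIn Gedge T}, n ≤ 7 := by
    rintro n ⟨T, hT, rfl, hc⟩
    exact upper hT hc
  exact le_antisymm (csSup_le ⟨7, h7⟩ hub) (le_csSup ⟨7, hub⟩ h7)
end

section
/- Let S ⊆ {1,…,12} be such that MAIS(G*_S) < α(G*_{S,u}). Then for every finite alphabet A with |A| ≥ 2, every positive integer m, and every valid index code of length ℓ with locality 1 for the three-receiver unicast problem B*_S, one has ℓ ≥ m·|S|. -/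
/-- A valid index code of length `ℓ` with locality `1` and message length `m`, over the
alphabet `A`, for the three-receiver unicast problem `B*_S` determined by the message subset
`S ⊆ {1, …, 12}`.  The messages are `x j ∈ A ^ m` for `j ∈ S`.  It consists of an encoder
`enc`, and for each receiver `i ∈ {1, 2, 3}` a set `R i` of at most `m * |Wᵢ ∩ S|` codeword
coordinates together with a decoder `dec i` which recovers the demanded messages
`(x j : j ∈ Wᵢ ∩ S)` from the observed codeword symbols `(enc x k : k ∈ R i)` and the side
information `(x j : j ∈ Kᵢ ∩ S)`. -/
structure ValidIndexCode (A : Type*) [Fintype A] (m ℓ : ℕ) (S : Finset ℕ) where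
  enc : ({j : ℕ // j ∈ S} → Fin m → A) → Fin ℓ → A
  R : Fin 3 → Finset (Fin ℓ)
  locality : ∀ i : Fin 3, (R i).card ≤ m * (Wset i ∩ S).card
  dec : ∀ i : Fin 3, ({k : Fin ℓ // k ∈ R i} → A) →
    ({j : ℕ // j ∈ Kset i ∩ S} → Fin m → A) → ({j : ℕ // j ∈ Wset i ∩ S} → Fin m → A)
  correct : ∀ (x : {j : ℕ // j ∈ S} → Fin m → A) (i : Fin 3)
      (j : {j : ℕ // j ∈ Wset i ∩ S}),
    dec i (fun k => enc x k.1) (fun j' => x ⟨j'.1, (Finset.mem_inter.mp j'.2).2⟩) j =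
      x ⟨j.1, (Finset.mem_inter.mp j.2).2⟩


instance decGedge (a b : ℕ) : Decidable (Gedge a b) := by unfold Gedge; infer_instance
instance decAdj (a b : ℕ) : Decidable (Gu.Adj a b) := by
  show Decidable (a ≠ b ∧ Gedge a b ∧ Gedge b a); infer_instance

def T1 : Finset ℕ := {2, 7, 10}
def T2 : Finset ℕ := {3, 6, 11}

def fr (n : ℕ) : ℕ :=
  if n = 1 ∨ n = 5 ∨ n = 9 then 2 else if n = 4 ∨ n = 8 ∨ n = 12 then 0 else 1

lemma rank_lemma : ∀ a ∈ Finset.Icc 1 12, ∀ b ∈ Finset.Icc 1 12,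
    Gedge a b → ¬ Gedge b a →
    (fr a < fr b ∨ (a ∈ T1 ∧ b ∈ T1) ∨ (a ∈ T2 ∧ b ∈ T2)) := by decide

lemma gedge_mem {a b : ℕ} (h : Gedge a b) :
    a ∈ Finset.Icc 1 12 ∧ b ∈ Finset.Icc 1 12 := by
  obtain ⟨i, h1, h2⟩ := h
  fin_cases i <;>
    simp only [Wset, Kset, Finset.mem_insert, Finset.mem_singleton, Finset.mem_Icc] at h1 h2 ⊢ <;>
    omega

lemma fr_T1 : ∀ a ∈ T1, fr a = 1 := by decide
lemma fr_T2 : ∀ a ∈ T2, fr a = 1 := by decide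
lemma T1_T2_disj : ∀ u : ℕ, u ∈ T1 → u ∈ T2 → False := by decide

lemma cyclic_const (n : ℕ) (g : Fin (n + 2) → ℕ) (hg : ∀ i, g i ≤ g (i + 1)) :
    ∀ i, g i = g 0 := by
  have add1 : ∀ (j : ℕ) (h : j + 1 < n + 2), (⟨j, by omega⟩ : Fin (n + 2)) + 1 = ⟨j + 1, h⟩ := by
    intro j h
    apply Fin.ext
    simp [Fin.add_def, Nat.mod_eq_of_lt h]
  have step : ∀ (j : ℕ) (h : j + 1 < n + 2), g ⟨j, by omega⟩ ≤ g ⟨j + 1, h⟩ := by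
    intro j h
    have := hg ⟨j, by omega⟩
    rwa [add1 j h] at this
  have up : ∀ (j : ℕ) (h : j < n + 2), g 0 ≤ g ⟨j, h⟩ := by
    intro j
    induction j with
    | zero => intro h; exact le_of_eq (congrArg g (Fin.ext rfl))
    | succ j ih => intro h; exact le_trans (ih (by omega)) (step j h)
  have down : ∀ (d j : ℕ), j + d = n + 1 → ∀ (hj : j < n + 2), g ⟨j, hj⟩ ≤ g ⟨n + 1, by omega⟩ := by
    intro d
    induction d with
    | zero =>
      intro j h hj
      have hj' : j = n + 1 := by omega
      subst hj'
      exact le_rfl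
    | succ d ih =>
      intro j h hj
      exact le_trans (step j (by omega)) (ih (j + 1) (by omega) (by omega))
  have wrap : g ⟨n + 1, by omega⟩ ≤ g 0 := by
    have := hg ⟨n + 1, by omega⟩
    have e : (⟨n + 1, by omega⟩ : Fin (n + 2)) + 1 = 0 := by
      apply Fin.ext
      simp [Fin.add_def]
    rwa [e] at this
  intro i
  have h1 : g 0 ≤ g i := by
    have := up i.val i.isLt
    simpa using this
  have h2 : g i ≤ g 0 := by
    have := down (n + 1 - i.val) i.val (by omega) i.isLt
    exact le_trans (by simpa using this) wrap
  omega

lemma classify_s16 {T : Finset ℕ} (hind : ∀ a ∈ T, ∀ b ∈ T, ¬ Gu.Adj a b)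
    (hcyc : HasDirCycleIn Gedge T) : T1 ⊆ T ∨ T2 ⊆ T := by
  obtain ⟨k, v, hinj, hmem, hedge⟩ := hcyc
  have hne1 : ∀ i : Fin (k + 2), i + 1 ≠ i := by
    intro i h
    have h0 : i + 1 = i + 0 := by simpa using h
    have : (1 : Fin (k + 2)) = 0 := add_left_cancel h0
    have := congrArg Fin.val this
    simp [Fin.val_one] at this
  have honew : ∀ i, ¬ Gedge (v (i + 1)) (v i) := by
    intro i hb
    exact hind (v (i + 1)) (hmem _) (v i) (hmem _) ⟨hinj.ne (hne1 i), hb, hedge i⟩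
  have hIcc : ∀ i, v i ∈ Finset.Icc 1 12 := fun i => (gedge_mem (hedge i)).1
  have key : ∀ i, fr (v i) < fr (v (i + 1)) ∨ (v i ∈ T1 ∧ v (i + 1) ∈ T1) ∨
      (v i ∈ T2 ∧ v (i + 1) ∈ T2) :=
    fun i => rank_lemma _ (hIcc i) _ (hIcc (i + 1)) (hedge i) (honew i)
  have mono : ∀ i, fr (v i) ≤ fr (v (i + 1)) := by
    intro i
    rcases key i with hlt | hp | hp
    · omega
    · rw [fr_T1 _ hp.1, fr_T1 _ hp.2]
    · rw [fr_T2 _ hp.1, fr_T2 _ hp.2]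
  have hconst := cyclic_const k (fun i => fr (v i)) mono
  have pairs : ∀ i, (v i ∈ T1 ∧ v (i + 1) ∈ T1) ∨ (v i ∈ T2 ∧ v (i + 1) ∈ T2) := by
    intro i
    rcases key i with hlt | hp | hp
    · exfalso
      have e1 := hconst i
      have e2 := hconst (i + 1)
      omega
    · exact .inl hp
    · exact .inr hp
  have propagate : ∀ (tA tB : Finset ℕ),
      (∀ i, (v i ∈ tA ∧ v (i + 1) ∈ tA) ∨ (v i ∈ tB ∧ v (i + 1) ∈ tB)) →
      (∀ u, u ∈ tA → u ∈ tB → False) → v 0 ∈ tA → ∀ i, v i ∈ tA := by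
    intro tA tB hp hd h0
    have main : ∀ (j : ℕ) (hj : j < k + 2), v ⟨j, hj⟩ ∈ tA := by
      intro j
      induction j with
      | zero => intro hj; exact h0
      | succ j ih =>
        intro hj
        have hjlt : j < k + 2 := by omega
        have hvj := ih hjlt
        have e : (⟨j, hjlt⟩ : Fin (k + 2)) + 1 = ⟨j + 1, hj⟩ := by
          apply Fin.ext
          simp [Fin.add_def, Nat.mod_eq_of_lt hj]
        rcases hp ⟨j, hjlt⟩ with hh | hh
        · rw [e] at hh; exact hh.2
        · exact absurd (hd _ hvj hh.1) (fun f => f)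
    intro i
    have := main i.val i.isLt
    simpa using this
  have finish : ∀ t : Finset ℕ, t.card = 3 → (∀ i, v i ∈ t) → t ⊆ T := by
    intro t hcard hall
    have hkle : k + 2 ≤ 3 := by
      have hle : (Finset.univ : Finset (Fin (k + 2))).card ≤ t.card :=
        Finset.card_le_card_of_injOn v (fun i _ => hall i) hinj.injOn
      simpa [hcard] using hle
    have hk1 : k = 0 ∨ k = 1 := by omega
    rcases hk1 with rfl | rfl
    · exfalso
      have h10 : Gedge (v 1) (v 0) := by
        have := hedge 1
        rwa [show (1 + 1 : Fin 2) = 0 from rfl] at this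
      exact honew 0 h10
    · have himg : Finset.image v Finset.univ = t := by
        apply Finset.eq_of_subset_of_card_le
        · intro u hu
          obtain ⟨i, _, rfl⟩ := Finset.mem_image.mp hu
          exact hall i
        · rw [Finset.card_image_of_injective _ hinj]
          simp [hcard]
      intro u hu
      rw [← himg] at hu
      obtain ⟨i, _, rfl⟩ := Finset.mem_image.mp hu
      exact hmem i
  rcases pairs 0 with h0 | h0
  · exact .inl (finish T1 (by decide) (propagate T1 T2 pairs T1_T2_disj h0.1))
  · exact .inr (finish T2 (by decide) (propagate T2 T1 (fun i => (pairs i).symm)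
      (fun u h2 h1 => T1_T2_disj u h1 h2) h0.1))


lemma gedge_irrefl (a : ℕ) : ¬ Gedge a a := by
  rintro ⟨i, h1, h2⟩
  fin_cases i <;>
    simp only [Wset, Kset, Finset.mem_insert, Finset.mem_singleton] at h1 h2 <;> omega

lemma no_cycle_empty : ¬ HasDirCycleIn Gedge ∅ := by
  rintro ⟨k, v, _, hmem, _⟩
  exact absurd (hmem 0) (by simp)

lemma insert_no_cycle {T : Finset ℕ} {z : ℕ} (hz : ∀ u ∈ T, ¬ Gedge z u)
    (hT : ¬ HasDirCycleIn Gedge T) : ¬ HasDirCycleIn Gedge (insert z T) := by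
  rintro ⟨k, v, hinj, hmem, hedge⟩
  by_cases hzr : ∃ i, v i = z
  · obtain ⟨i, hi⟩ := hzr
    have he := hedge i
    rw [hi] at he
    rcases Finset.mem_insert.mp (hmem (i + 1)) with h | h
    · rw [h] at he; exact gedge_irrefl z he
    · exact hz _ h he
  · push_neg at hzr
    exact hT ⟨k, v, hinj, fun i => (Finset.mem_insert.mp (hmem i)).resolve_left (hzr i), hedge⟩

lemma no_cycle_of_indep {T : Finset ℕ} (hind : ∀ a ∈ T, ∀ b ∈ T, ¬ Gu.Adj a b)
    (h1 : ¬ T1 ⊆ T) (h2 : ¬ T2 ⊆ T) : ¬ HasDirCycleIn Gedge T :=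
  fun hc => (classify_s16 hind hc).elim h1 h2

lemma not_both {T : Finset ℕ} (hind : ∀ a ∈ T, ∀ b ∈ T, ¬ Gu.Adj a b)
    (h1 : T1 ⊆ T) (h2 : T2 ⊆ T) : False :=
  hind 10 (h1 (by decide)) 3 (h2 (by decide)) (by decide)

/-- The swap construction: replace `c` by `z` in `T`. -/
lemma swap_core {S T : Finset ℕ} (hTS : T ⊆ S) (hind : ∀ a ∈ T, ∀ b ∈ T, ¬ Gu.Adj a b)
    (z c : ℕ) (hzS : z ∈ S) (hcT : c ∈ T) (hzT : z ∉ T)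
    (hout : ∀ u ∈ T, u ≠ c → ¬ Gedge z u)
    (hnc1 : ¬ T1 ⊆ T.erase c) (hnc2 : ¬ T2 ⊆ T.erase c) :
    ∃ T' : Finset ℕ, T' ⊆ S ∧ T'.card = T.card ∧ ¬ HasDirCycleIn Gedge T' := by
  refine ⟨insert z (T.erase c), ?_, ?_, ?_⟩
  · intro u hu
    rcases Finset.mem_insert.mp hu with rfl | hu
    · exact hzS
    · exact hTS (Finset.mem_of_mem_erase hu)
  · rw [Finset.card_insert_of_notMem (fun hz => hzT (Finset.mem_of_mem_erase hz)),
      Finset.card_erase_of_mem hcT]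
    have : 0 < T.card := Finset.card_pos.mpr ⟨c, hcT⟩
    omega
  · apply insert_no_cycle
    · intro u hu
      exact hout u (Finset.mem_of_mem_erase hu) (Finset.ne_of_mem_erase hu)
    · refine no_cycle_of_indep ?_ hnc1 hnc2
      intro a ha b hb
      exact hind a (Finset.mem_of_mem_erase ha) b (Finset.mem_of_mem_erase hb)

lemma hout_mk {T tri : Finset ℕ} (hind : ∀ a ∈ T, ∀ b ∈ T, ¬ Gu.Adj a b) (htri : tri ⊆ T)
    (z c : ℕ) (Kz : Finset ℕ) (hKz : ∀ u, Gedge z u → u ∈ Kz)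
    (hfacts : ∀ u ∈ Kz, u ≠ c → ∃ t ∈ tri, Gu.Adj u t) :
    ∀ u ∈ T, u ≠ c → ¬ Gedge z u := by
  intro u hu hne hg
  obtain ⟨t, ht, hadj⟩ := hfacts u (hKz u hg) hne
  exact hind u hu t (htri ht) hadj

lemma z_not_in {T tri : Finset ℕ} (hind : ∀ a ∈ T, ∀ b ∈ T, ¬ Gu.Adj a b) (htri : tri ⊆ T)
    {z t₀ : ℕ} (ht₀ : t₀ ∈ tri) (hadj : Gu.Adj z t₀) : z ∉ T :=
  fun hz => hind z hz t₀ (htri ht₀) hadj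

lemma not_sub_erase {T : Finset ℕ} {c : ℕ} {tri : Finset ℕ} (hc : c ∈ tri) :
    ¬ tri ⊆ T.erase c :=
  fun hsub => absurd (hsub hc) (Finset.notMem_erase c T)

lemma Kz_of_W (z : ℕ) (i : Fin 3) (hz : z ∈ Wset i)
    (hz' : ∀ i' : Fin 3, i' ≠ i → z ∉ Wset i') : ∀ u, Gedge z u → u ∈ Kset i := by
  rintro u ⟨i', h1, h2⟩
  rcases eq_or_ne i' i with rfl | hne
  · exact h2
  · exact absurd h1 (hz' i' hne)

lemma alpha_le_mais_of_H {S : Finset ℕ}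
    (H : ∀ T : Finset ℕ, T ⊆ S → (∀ a ∈ T, ∀ b ∈ T, ¬ Gu.Adj a b) → (T1 ⊆ T ∨ T2 ⊆ T) →
      ∃ T' : Finset ℕ, T' ⊆ S ∧ T'.card = T.card ∧ ¬ HasDirCycleIn Gedge T') :
    alphaOn Gu S ≤ maisOn Gedge S := by
  apply csSup_le
  · exact ⟨0, ∅, by simp, by simp, by simp⟩
  · rintro n ⟨T, hTS, hcard, hind⟩
    have hmem : n ∈ {n : ℕ | ∃ T : Finset ℕ, T ⊆ S ∧ T.card = n ∧ ¬ HasDirCycleIn Gedge T} := by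
      by_cases hcyc : HasDirCycleIn Gedge T
      · obtain ⟨T', h1, h2, h3⟩ := H T hTS hind (classify_s16 hind hcyc)
        exact ⟨T', h1, h2.trans hcard, h3⟩
      · exact ⟨T, hTS, hcard, hcyc⟩
    exact le_csSup ⟨S.card, fun n' ⟨T', h1, h2, _⟩ => h2 ▸ Finset.card_le_card h1⟩ hmem

lemma cond01 {S : Finset ℕ} (h : maisOn Gedge S < alphaOn Gu S) :
    (1 ∉ S ∧ 2 ∉ S) ∨ (5 ∉ S ∧ 6 ∉ S) := by
  by_contra hcon
  push_neg at hcon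
  have ha : 1 ∈ S ∨ 2 ∈ S := by
    by_cases h1 : 1 ∈ S
    · exact .inl h1
    · exact .inr (hcon.1 h1)
  have hb : 5 ∈ S ∨ 6 ∈ S := by
    by_cases h5 : 5 ∈ S
    · exact .inl h5
    · exact .inr (hcon.2 h5)
  refine absurd (alpha_le_mais_of_H ?_) (not_le.mpr h)
  intro T hTS hind htri
  rcases htri with htr | htr
  · rcases hb with hz | hz
    · exact swap_core hTS hind 5 2 hz (htr (by decide))
        (z_not_in hind htr (show (2:ℕ) ∈ T1 by decide) (by decide : Gu.Adj 5 2))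
        (hout_mk hind htr 5 2 (Kset 1) (Kz_of_W 5 1 (by decide) (by decide)) (by decide))
        (not_sub_erase (by decide))
        (fun hsub => not_both hind htr (fun x hx => Finset.mem_of_mem_erase (hsub hx)))
    · exact swap_core hTS hind 6 2 hz (htr (by decide))
        (z_not_in hind htr (show (2:ℕ) ∈ T1 by decide) (by decide : Gu.Adj 6 2))
        (hout_mk hind htr 6 2 (Kset 1) (Kz_of_W 6 1 (by decide) (by decide)) (by decide))
        (not_sub_erase (by decide))
        (fun hsub => not_both hind htr (fun x hx => Finset.mem_of_mem_erase (hsub hx)))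
  · rcases ha with hz | hz
    · exact swap_core hTS hind 1 6 hz (htr (by decide))
        (z_not_in hind htr (show (6:ℕ) ∈ T2 by decide) (by decide : Gu.Adj 1 6))
        (hout_mk hind htr 1 6 (Kset 0) (Kz_of_W 1 0 (by decide) (by decide)) (by decide))
        (fun hsub => not_both hind (fun x hx => Finset.mem_of_mem_erase (hsub hx)) htr)
        (not_sub_erase (by decide))
    · exact swap_core hTS hind 2 6 hz (htr (by decide))
        (z_not_in hind htr (show (6:ℕ) ∈ T2 by decide) (by decide : Gu.Adj 2 6))
        (hout_mk hind htr 2 6 (Kset 0) (Kz_of_W 2 0 (by decide) (by decide)) (by decide))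
        (fun hsub => not_both hind (fun x hx => Finset.mem_of_mem_erase (hsub hx)) htr)
        (not_sub_erase (by decide))

lemma cond02 {S : Finset ℕ} (h : maisOn Gedge S < alphaOn Gu S) :
    (1 ∉ S ∧ 3 ∉ S) ∨ (9 ∉ S ∧ 10 ∉ S) := by
  by_contra hcon
  push_neg at hcon
  have ha : 1 ∈ S ∨ 3 ∈ S := by
    by_cases h1 : 1 ∈ S
    · exact .inl h1
    · exact .inr (hcon.1 h1)
  have hb : 9 ∈ S ∨ 10 ∈ S := by
    by_cases h9 : 9 ∈ S
    · exact .inl h9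
    · exact .inr (hcon.2 h9)
  refine absurd (alpha_le_mais_of_H ?_) (not_le.mpr h)
  intro T hTS hind htri
  rcases htri with htr | htr
  · rcases ha with hz | hz
    · exact swap_core hTS hind 1 10 hz (htr (by decide))
        (z_not_in hind htr (show (10:ℕ) ∈ T1 by decide) (by decide : Gu.Adj 1 10))
        (hout_mk hind htr 1 10 (Kset 0) (Kz_of_W 1 0 (by decide) (by decide)) (by decide))
        (not_sub_erase (by decide))
        (fun hsub => not_both hind htr (fun x hx => Finset.mem_of_mem_erase (hsub hx)))
    · exact swap_core hTS hind 3 10 hz (htr (by decide))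
        (z_not_in hind htr (show (10:ℕ) ∈ T1 by decide) (by decide : Gu.Adj 3 10))
        (hout_mk hind htr 3 10 (Kset 0) (Kz_of_W 3 0 (by decide) (by decide)) (by decide))
        (not_sub_erase (by decide))
        (fun hsub => not_both hind htr (fun x hx => Finset.mem_of_mem_erase (hsub hx)))
  · rcases hb with hz | hz
    · exact swap_core hTS hind 9 3 hz (htr (by decide))
        (z_not_in hind htr (show (3:ℕ) ∈ T2 by decide) (by decide : Gu.Adj 9 3))
        (hout_mk hind htr 9 3 (Kset 2) (Kz_of_W 9 2 (by decide) (by decide)) (by decide))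
        (fun hsub => not_both hind (fun x hx => Finset.mem_of_mem_erase (hsub hx)) htr)
        (not_sub_erase (by decide))
    · exact swap_core hTS hind 10 3 hz (htr (by decide))
        (z_not_in hind htr (show (3:ℕ) ∈ T2 by decide) (by decide : Gu.Adj 10 3))
        (hout_mk hind htr 10 3 (Kset 2) (Kz_of_W 10 2 (by decide) (by decide)) (by decide))
        (fun hsub => not_both hind (fun x hx => Finset.mem_of_mem_erase (hsub hx)) htr)
        (not_sub_erase (by decide))

lemma cond12 {S : Finset ℕ} (h : maisOn Gedge S < alphaOn Gu S) :
    (5 ∉ S ∧ 7 ∉ S) ∨ (9 ∉ S ∧ 11 ∉ S) := by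
  by_contra hcon
  push_neg at hcon
  have ha : 5 ∈ S ∨ 7 ∈ S := by
    by_cases h5 : 5 ∈ S
    · exact .inl h5
    · exact .inr (hcon.1 h5)
  have hb : 9 ∈ S ∨ 11 ∈ S := by
    by_cases h9 : 9 ∈ S
    · exact .inl h9
    · exact .inr (hcon.2 h9)
  refine absurd (alpha_le_mais_of_H ?_) (not_le.mpr h)
  intro T hTS hind htri
  rcases htri with htr | htr
  · rcases hb with hz | hz
    · exact swap_core hTS hind 9 7 hz (htr (by decide))
        (z_not_in hind htr (show (7:ℕ) ∈ T1 by decide) (by decide : Gu.Adj 9 7))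
        (hout_mk hind htr 9 7 (Kset 2) (Kz_of_W 9 2 (by decide) (by decide)) (by decide))
        (not_sub_erase (by decide))
        (fun hsub => not_both hind htr (fun x hx => Finset.mem_of_mem_erase (hsub hx)))
    · exact swap_core hTS hind 11 7 hz (htr (by decide))
        (z_not_in hind htr (show (7:ℕ) ∈ T1 by decide) (by decide : Gu.Adj 11 7))
        (hout_mk hind htr 11 7 (Kset 2) (Kz_of_W 11 2 (by decide) (by decide)) (by decide))
        (not_sub_erase (by decide))
        (fun hsub => not_both hind htr (fun x hx => Finset.mem_of_mem_erase (hsub hx)))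
  · rcases ha with hz | hz
    · exact swap_core hTS hind 5 11 hz (htr (by decide))
        (z_not_in hind htr (show (11:ℕ) ∈ T2 by decide) (by decide : Gu.Adj 5 11))
        (hout_mk hind htr 5 11 (Kset 1) (Kz_of_W 5 1 (by decide) (by decide)) (by decide))
        (fun hsub => not_both hind (fun x hx => Finset.mem_of_mem_erase (hsub hx)) htr)
        (not_sub_erase (by decide))
    · exact swap_core hTS hind 7 11 hz (htr (by decide))
        (z_not_in hind htr (show (11:ℕ) ∈ T2 by decide) (by decide : Gu.Adj 7 11))
        (hout_mk hind htr 7 11 (Kset 1) (Kz_of_W 7 1 (by decide) (by decide)) (by decide))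
        (fun hsub => not_both hind (fun x hx => Finset.mem_of_mem_erase (hsub hx)) htr)
        (not_sub_erase (by decide))


lemma WK_disj : ∀ i : Fin 3, ∀ a ∈ Kset i, a ∉ Wset i := by decide

section coding

variable {A : Type*} [Fintype A] {m ℓ : ℕ} {S : Finset ℕ}

lemma card_obs (code : ValidIndexCode A m ℓ S) (i : Fin 3) :
    Fintype.card ({k : Fin ℓ // k ∈ code.R i} → A) = Fintype.card A ^ (code.R i).card := by
  rw [Fintype.card_fun, Fintype.card_coe]

lemma card_msg (i : Fin 3) :
    Fintype.card ({j : ℕ // j ∈ Wset i ∩ S} → Fin m → A) =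
      Fintype.card A ^ (m * (Wset i ∩ S).card) := by
  rw [Fintype.card_fun, Fintype.card_fun, Fintype.card_coe, Fintype.card_fin, ← pow_mul, mul_comm m ((Wset i ∩ S).card)]

lemma dec_surj [Nonempty A] (code : ValidIndexCode A m ℓ S) (i : Fin 3)
    (s : {j : ℕ // j ∈ Kset i ∩ S} → Fin m → A) :
    Function.Surjective (fun g : {k : Fin ℓ // k ∈ code.R i} → A => code.dec i g s) := by
  classical
  intro w
  set x : {j : ℕ // j ∈ S} → Fin m → A := fun j =>
    if h : j.1 ∈ Wset i then w ⟨j.1, Finset.mem_inter.mpr ⟨h, j.2⟩⟩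
    else if h' : j.1 ∈ Kset i then s ⟨j.1, Finset.mem_inter.mpr ⟨h', j.2⟩⟩
    else fun _ => Classical.ofNonempty with hx
  have hside : (fun j' : {j : ℕ // j ∈ Kset i ∩ S} =>
      x ⟨j'.1, (Finset.mem_inter.mp j'.2).2⟩) = s := by
    funext j'
    have hK := (Finset.mem_inter.mp j'.2).1
    have hW : ¬ (j'.1 ∈ Wset i) := WK_disj i j'.1 hK
    simp only [hx, dif_neg hW, dif_pos hK]
  refine ⟨fun k => code.enc x k.1, ?_⟩
  show code.dec i (fun k => code.enc x k.1) s = w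
  rw [← hside]
  funext j
  rw [code.correct x i j]
  have hW := (Finset.mem_inter.mp j.2).1
  simp only [hx, dif_pos hW]

lemma Rcard (code : ValidIndexCode A m ℓ S) (hA : 2 ≤ Fintype.card A) (i : Fin 3) :
    (code.R i).card = m * (Wset i ∩ S).card := by
  haveI : Nonempty A := Fintype.card_pos_iff.mp (by omega)
  have hsur := dec_surj code i (fun _ _ => Classical.ofNonempty)
  have hle := Fintype.card_le_of_surjective _ hsur
  rw [card_obs, card_msg] at hle
  have h2 : m * (Wset i ∩ S).card ≤ (code.R i).card :=
    (Nat.pow_le_pow_iff_right (by omega : 1 < Fintype.card A)).mp hle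
  exact le_antisymm (code.locality i) h2

lemma dec_inj (code : ValidIndexCode A m ℓ S) (hA : 2 ≤ Fintype.card A) (i : Fin 3)
    (s : {j : ℕ // j ∈ Kset i ∩ S} → Fin m → A) :
    Function.Injective (fun g : {k : Fin ℓ // k ∈ code.R i} → A => code.dec i g s) := by
  haveI : Nonempty A := Fintype.card_pos_iff.mp (by omega)
  have hsur := dec_surj code i s
  have hbij : Function.Bijective (fun g : {k : Fin ℓ // k ∈ code.R i} → A => code.dec i g s) := by
    rw [Fintype.bijective_iff_surjective_and_card]
    exact ⟨hsur, by rw [card_obs, card_msg, Rcard code hA]⟩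
  exact hbij.injective

lemma enc_local (code : ValidIndexCode A m ℓ S) (hA : 2 ≤ Fintype.card A) (i : Fin 3)
    (x x' : {j : ℕ // j ∈ S} → Fin m → A)
    (hxx : ∀ j : {j : ℕ // j ∈ S}, (j.1 ∈ Wset i ∨ j.1 ∈ Kset i) → x j = x' j) :
    ∀ k, k ∈ code.R i → code.enc x k = code.enc x' k := by
  have hs : (fun j' : {j : ℕ // j ∈ Kset i ∩ S} => x ⟨j'.1, (Finset.mem_inter.mp j'.2).2⟩) =
      (fun j' => x' ⟨j'.1, (Finset.mem_inter.mp j'.2).2⟩) :=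
    funext fun j' => hxx _ (Or.inr (Finset.mem_inter.mp j'.2).1)
  have hw : (fun j : {j : ℕ // j ∈ Wset i ∩ S} => x ⟨j.1, (Finset.mem_inter.mp j.2).2⟩) =
      (fun j => x' ⟨j.1, (Finset.mem_inter.mp j.2).2⟩) :=
    funext fun j => hxx _ (Or.inl (Finset.mem_inter.mp j.2).1)
  have e1 : code.dec i (fun k => code.enc x k.1)
      (fun j' => x ⟨j'.1, (Finset.mem_inter.mp j'.2).2⟩) =
      (fun j => x ⟨j.1, (Finset.mem_inter.mp j.2).2⟩) := funext (code.correct x i)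
  have e2 : code.dec i (fun k => code.enc x' k.1)
      (fun j' => x' ⟨j'.1, (Finset.mem_inter.mp j'.2).2⟩) =
      (fun j => x' ⟨j.1, (Finset.mem_inter.mp j.2).2⟩) := funext (code.correct x' i)
  have hdec : code.dec i (fun k => code.enc x k.1)
      (fun j' => x' ⟨j'.1, (Finset.mem_inter.mp j'.2).2⟩) =
      code.dec i (fun k => code.enc x' k.1)
      (fun j' => x' ⟨j'.1, (Finset.mem_inter.mp j'.2).2⟩) := by
    rw [e2, ← hw, ← hs, e1]
  have := dec_inj code hA i (fun j' => x' ⟨j'.1, (Finset.mem_inter.mp j'.2).2⟩) hdec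
  intro k hk
  exact congrFun this ⟨k, hk⟩

end coding

section disj

variable {A : Type*} [Fintype A] {m ℓ : ℕ} {S : Finset ℕ}

lemma R_disj (code : ValidIndexCode A m ℓ S) (hA : 2 ≤ Fintype.card A)
    (hS : S ⊆ Finset.Icc 1 12) (i i' : Fin 3) (P : Finset ℕ)
    (hP : ∀ u ∈ Finset.Icc 1 12,
      (u ∈ Wset i ∨ u ∈ Kset i) → (u ∈ Wset i' ∨ u ∈ Kset i') → u ∈ P)
    (hPW : ∀ u ∈ P, u ∈ Wset i → u ∉ S) :
    Disjoint (code.R i) (code.R i') := by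
  classical
  haveI : Nonempty A := Fintype.card_pos_iff.mp (by omega)
  rw [Finset.disjoint_left]
  intro k hk hk'
  -- base point
  let x₀ : {j : ℕ // j ∈ S} → Fin m → A := fun _ _ => Classical.ofNonempty
  -- the family of inputs obtained by overriding the demanded messages of receiver i
  let F : ({j : ℕ // j ∈ Wset i ∩ S} → Fin m → A) → ({j : ℕ // j ∈ S} → Fin m → A) :=
    fun w j => if h : j.1 ∈ Wset i then w ⟨j.1, Finset.mem_inter.mpr ⟨h, j.2⟩⟩ else x₀ j
  have hside : ∀ w, (fun j' : {j : ℕ // j ∈ Kset i ∩ S} =>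
      F w ⟨j'.1, (Finset.mem_inter.mp j'.2).2⟩) =
      (fun j' : {j : ℕ // j ∈ Kset i ∩ S} => x₀ ⟨j'.1, (Finset.mem_inter.mp j'.2).2⟩) :=
    fun w => funext fun j' => dif_neg (WK_disj i j'.1 (Finset.mem_inter.mp j'.2).1)
  have hrec : ∀ w, code.dec i (fun k' : {k' : Fin ℓ // k' ∈ code.R i} => code.enc (F w) k'.1)
      (fun j' => x₀ ⟨j'.1, (Finset.mem_inter.mp j'.2).2⟩) = w := by
    intro w
    rw [← hside w]
    funext j
    rw [code.correct (F w) i j]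
    exact dif_pos (Finset.mem_inter.mp j.2).1
  have hGinj : Function.Injective
      (fun w : ({j : ℕ // j ∈ Wset i ∩ S} → Fin m → A) =>
        (fun k' : {k' : Fin ℓ // k' ∈ code.R i} => code.enc (F w) k'.1)) := by
    intro w w' he
    have he' : (fun k' : {k' : Fin ℓ // k' ∈ code.R i} => code.enc (F w) k'.1) =
        (fun k' : {k' : Fin ℓ // k' ∈ code.R i} => code.enc (F w') k'.1) := he
    have := hrec w
    rw [he', hrec w'] at this
    exact this.symm
  -- the coordinate k of the codeword is constant along the family F
  have hconst : ∀ w w', code.enc (F w) k = code.enc (F w') k := by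
    intro w w'
    let y : {j : ℕ // j ∈ S} → Fin m → A :=
      fun j => if j.1 ∈ Wset i ∨ j.1 ∈ Kset i then F w j else F w' j
    have e1 : code.enc (F w) k = code.enc y k := by
      apply enc_local code hA i
      · intro j hj
        simp only [y, if_pos hj]
      · exact hk
    have e2 : code.enc y k = code.enc (F w') k := by
      apply enc_local code hA i'
      · intro j hj'
        by_cases hj : j.1 ∈ Wset i ∨ j.1 ∈ Kset i
        · have hjP : j.1 ∈ P := hP j.1 (hS j.2) hj hj'
          have hjW : j.1 ∉ Wset i := fun hw => hPW j.1 hjP hw j.2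
          simp only [y, if_pos hj, F, dif_neg hjW]
        · simp only [y, if_neg hj]
      · exact hk'
    exact e1.trans e2
  -- dropping coordinate k still determines the messages: contradiction with counting
  have hG'inj : Function.Injective
      (fun w : ({j : ℕ // j ∈ Wset i ∩ S} → Fin m → A) =>
        (fun k' : {k' : Fin ℓ // k' ∈ (code.R i).erase k} => code.enc (F w) k'.1)) := by
    intro w w' he
    apply hGinj
    funext k'
    rcases eq_or_ne k'.1 k with hek | hek
    · show code.enc (F w) k'.1 = code.enc (F w') k'.1
      rw [hek]
      exact hconst w w'
    · exact congrFun he ⟨k'.1, Finset.mem_erase.mpr ⟨hek, k'.2⟩⟩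
  have hcard := Fintype.card_le_of_injective _ hG'inj
  rw [card_msg, Fintype.card_fun, Fintype.card_coe, Finset.card_erase_of_mem hk,
    Rcard code hA i] at hcard
  have hpos : 0 < m * (Wset i ∩ S).card := by
    have : 0 < (code.R i).card := Finset.card_pos.mpr ⟨k, hk⟩
    rwa [Rcard code hA i] at this
  have := (Nat.pow_le_pow_iff_right (by omega : 1 < Fintype.card A)).mp hcard
  omega

end disj

lemma hP01 : ∀ u ∈ Finset.Icc 1 12, (u ∈ Wset 0 ∨ u ∈ Kset 0) → (u ∈ Wset 1 ∨ u ∈ Kset 1) →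
    u ∈ ({1, 2, 5, 6, 9} : Finset ℕ) := by decide
lemma hP02 : ∀ u ∈ Finset.Icc 1 12, (u ∈ Wset 0 ∨ u ∈ Kset 0) → (u ∈ Wset 2 ∨ u ∈ Kset 2) →
    u ∈ ({1, 3, 5, 9, 10} : Finset ℕ) := by decide
lemma hP12 : ∀ u ∈ Finset.Icc 1 12, (u ∈ Wset 1 ∨ u ∈ Kset 1) → (u ∈ Wset 2 ∨ u ∈ Kset 2) →
    u ∈ ({1, 5, 7, 9, 11} : Finset ℕ) := by decide
lemma pw01a : ∀ u ∈ ({1, 2, 5, 6, 9} : Finset ℕ), u ∈ Wset 0 → u = 1 ∨ u = 2 := by decide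
lemma pw01b : ∀ u ∈ ({1, 2, 5, 6, 9} : Finset ℕ), u ∈ Wset 1 → u = 5 ∨ u = 6 := by decide
lemma pw02a : ∀ u ∈ ({1, 3, 5, 9, 10} : Finset ℕ), u ∈ Wset 0 → u = 1 ∨ u = 3 := by decide
lemma pw02b : ∀ u ∈ ({1, 3, 5, 9, 10} : Finset ℕ), u ∈ Wset 2 → u = 9 ∨ u = 10 := by decide
lemma pw12a : ∀ u ∈ ({1, 5, 7, 9, 11} : Finset ℕ), u ∈ Wset 1 → u = 5 ∨ u = 7 := by decide
lemma pw12b : ∀ u ∈ ({1, 5, 7, 9, 11} : Finset ℕ), u ∈ Wset 2 → u = 9 ∨ u = 11 := by decide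
lemma W_cover : ∀ u ∈ Finset.Icc 1 12, u ∈ Wset 0 ∨ u ∈ Wset 1 ∨ u ∈ Wset 2 := by decide
lemma W_disj01 : ∀ u ∈ Wset 0, u ∉ Wset 1 := by decide
lemma W_disj02 : ∀ u ∈ Wset 0, u ∉ Wset 2 := by decide
lemma W_disj12 : ∀ u ∈ Wset 1, u ∉ Wset 2 := by decide


/-- If `MAIS(G*_S) < α(G*_{S,u})`, then every valid index code of length `ℓ` with locality `1`
for `B*_S` over an alphabet of size at least `2` satisfies `ℓ ≥ m * |S|`. -/
theorem length_lower_bound_of_mais_lt_alpha (S : Finset ℕ) (hS : S ⊆ Finset.Icc 1 12)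
    (h : maisOn Gedge S < alphaOn Gu S)
    (A : Type*) [Fintype A] (hA : 2 ≤ Fintype.card A)
    (m : ℕ) (hm : 0 < m) (ℓ : ℕ) (code : ValidIndexCode A m ℓ S) :
    m * S.card ≤ ℓ := by
  classical
  have d01 : Disjoint (code.R 0) (code.R 1) := by
    rcases cond01 h with hc | hc
    · refine R_disj code hA hS 0 1 {1, 2, 5, 6, 9} hP01 ?_
      intro u hu hw
      rcases pw01a u hu hw with rfl | rfl
      · exact hc.1
      · exact hc.2
    · refine (R_disj code hA hS 1 0 {1, 2, 5, 6, 9}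
        (fun u hu h1 h2 => hP01 u hu h2 h1) ?_).symm
      intro u hu hw
      rcases pw01b u hu hw with rfl | rfl
      · exact hc.1
      · exact hc.2
  have d02 : Disjoint (code.R 0) (code.R 2) := by
    rcases cond02 h with hc | hc
    · refine R_disj code hA hS 0 2 {1, 3, 5, 9, 10} hP02 ?_
      intro u hu hw
      rcases pw02a u hu hw with rfl | rfl
      · exact hc.1
      · exact hc.2
    · refine (R_disj code hA hS 2 0 {1, 3, 5, 9, 10}
        (fun u hu h1 h2 => hP02 u hu h2 h1) ?_).symm
      intro u hu hw
      rcases pw02b u hu hw with rfl | rfl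
      · exact hc.1
      · exact hc.2
  have d12 : Disjoint (code.R 1) (code.R 2) := by
    rcases cond12 h with hc | hc
    · refine R_disj code hA hS 1 2 {1, 5, 7, 9, 11} hP12 ?_
      intro u hu hw
      rcases pw12a u hu hw with rfl | rfl
      · exact hc.1
      · exact hc.2
    · refine (R_disj code hA hS 2 1 {1, 5, 7, 9, 11}
        (fun u hu h1 h2 => hP12 u hu h2 h1) ?_).symm
      intro u hu hw
      rcases pw12b u hu hw with rfl | rfl
      · exact hc.1
      · exact hc.2
  have hun : (code.R 0 ∪ code.R 1 ∪ code.R 2).card =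
      (code.R 0).card + (code.R 1).card + (code.R 2).card := by
    rw [Finset.card_union_of_disjoint
        (Finset.disjoint_union_left.mpr ⟨d02, d12⟩),
      Finset.card_union_of_disjoint d01]
  have hle : (code.R 0 ∪ code.R 1 ∪ code.R 2).card ≤ ℓ := by
    have := Finset.card_le_univ (code.R 0 ∪ code.R 1 ∪ code.R 2)
    simpa using this
  have hparts : (Wset 0 ∩ S).card + (Wset 1 ∩ S).card + (Wset 2 ∩ S).card = S.card := by
    have hU : (Wset 0 ∩ S) ∪ (Wset 1 ∩ S) ∪ (Wset 2 ∩ S) = S := by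
      apply Finset.Subset.antisymm
      · intro u hu
        rcases Finset.mem_union.mp hu with hu | hu
        · rcases Finset.mem_union.mp hu with hu | hu
          · exact (Finset.mem_inter.mp hu).2
          · exact (Finset.mem_inter.mp hu).2
        · exact (Finset.mem_inter.mp hu).2
      · intro u hu
        rcases W_cover u (hS hu) with hw | hw | hw
        · exact Finset.mem_union.mpr (.inl (Finset.mem_union.mpr
            (.inl (Finset.mem_inter.mpr ⟨hw, hu⟩))))
        · exact Finset.mem_union.mpr (.inl (Finset.mem_union.mpr
            (.inr (Finset.mem_inter.mpr ⟨hw, hu⟩))))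
        · exact Finset.mem_union.mpr (.inr (Finset.mem_inter.mpr ⟨hw, hu⟩))
    have e01 : Disjoint (Wset 0 ∩ S) (Wset 1 ∩ S) := Finset.disjoint_left.mpr
      (fun u hu hu' => W_disj01 u (Finset.mem_inter.mp hu).1 (Finset.mem_inter.mp hu').1)
    have e02 : Disjoint (Wset 0 ∩ S) (Wset 2 ∩ S) := Finset.disjoint_left.mpr
      (fun u hu hu' => W_disj02 u (Finset.mem_inter.mp hu).1 (Finset.mem_inter.mp hu').1)
    have e12 : Disjoint (Wset 1 ∩ S) (Wset 2 ∩ S) := Finset.disjoint_left.mpr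
      (fun u hu hu' => W_disj12 u (Finset.mem_inter.mp hu).1 (Finset.mem_inter.mp hu').1)
    have hcu : ((Wset 0 ∩ S) ∪ (Wset 1 ∩ S) ∪ (Wset 2 ∩ S)).card =
        (Wset 0 ∩ S).card + (Wset 1 ∩ S).card + (Wset 2 ∩ S).card := by
      rw [Finset.card_union_of_disjoint
          (Finset.disjoint_union_left.mpr ⟨e02, e12⟩),
        Finset.card_union_of_disjoint e01]
    rw [← hcu, hU]
  have r0 := Rcard code hA 0
  have r1 := Rcard code hA 1
  have r2 := Rcard code hA 2
  have : m * S.card = (code.R 0).card + (code.R 1).card + (code.R 2).card := by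
    rw [r0, r1, r2, ← Nat.mul_add, ← Nat.mul_add, hparts]
  omega
end

section
/- There exists a valid index code of length ℓ = 7 with locality 1 and message length m = 1 over the alphabet A = Z/2Z for the three-receiver unicast problem B* (i.e., B*_S with S = {1,…,12}). Concretely, the encoder transmitting the seven symbols x_1+x_5+x_9, x_2+x_6, x_3+x_{10}, x_7+x_{11}, x_4, x_8, x_{12} admits, for each receiver i ∈ {1,2,3}, a set R_i of 4 codeword coordinates and a decoder recovering (x_j : j ∈ W_i) from (c_k : k ∈ R_i) and (x_j : j ∈ K_i). -/
/-- There is a valid index code of length `7` with locality `1` and message length `m = 1`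
over `ZMod 2` for the problem `B*` whose seven transmitted symbols are
`x₁+x₅+x₉, x₂+x₆, x₃+x₁₀, x₇+x₁₁, x₄, x₈, x₁₂`, and each receiver observes a set of `4`
codeword coordinates. -/
theorem exists_optimal_code_for_Bstar :
    ∃ code : ValidIndexCode (ZMod 2) 1 7 (Finset.Icc 1 12),
      (∀ i : Fin 3, (code.R i).card = 4) ∧
      ∀ x : {j : ℕ // j ∈ Finset.Icc 1 12} → Fin 1 → ZMod 2,
        code.enc x 0 = x ⟨1, by decide⟩ 0 + x ⟨5, by decide⟩ 0 + x ⟨9, by decide⟩ 0 ∧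
        code.enc x 1 = x ⟨2, by decide⟩ 0 + x ⟨6, by decide⟩ 0 ∧
        code.enc x 2 = x ⟨3, by decide⟩ 0 + x ⟨10, by decide⟩ 0 ∧
        code.enc x 3 = x ⟨7, by decide⟩ 0 + x ⟨11, by decide⟩ 0 ∧
        code.enc x 4 = x ⟨4, by decide⟩ 0 ∧
        code.enc x 5 = x ⟨8, by decide⟩ 0 ∧
        code.enc x 6 = x ⟨12, by decide⟩ 0 := by
  classical
  refine ⟨{
    enc := fun x k => match k with
      | 0 => x ⟨1, by decide⟩ 0 + x ⟨5, by decide⟩ 0 + x ⟨9, by decide⟩ 0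
      | 1 => x ⟨2, by decide⟩ 0 + x ⟨6, by decide⟩ 0
      | 2 => x ⟨3, by decide⟩ 0 + x ⟨10, by decide⟩ 0
      | 3 => x ⟨7, by decide⟩ 0 + x ⟨11, by decide⟩ 0
      | 4 => x ⟨4, by decide⟩ 0
      | 5 => x ⟨8, by decide⟩ 0
      | 6 => x ⟨12, by decide⟩ 0
    R := fun i => match i with
      | 0 => {0, 1, 2, 4}
      | 1 => {0, 1, 3, 5}
      | 2 => {0, 2, 3, 6}
    locality := by decide
    dec := fun i => match i with
      | 0 => fun obs side j => fun _ =>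
          if j.1 = 1 then
            obs ⟨0, by decide⟩ - side ⟨5, by decide⟩ 0 - side ⟨9, by decide⟩ 0
          else if j.1 = 2 then obs ⟨1, by decide⟩ - side ⟨6, by decide⟩ 0
          else if j.1 = 3 then obs ⟨2, by decide⟩ - side ⟨10, by decide⟩ 0
          else obs ⟨4, by decide⟩
      | 1 => fun obs side j => fun _ =>
          if j.1 = 5 then
            obs ⟨0, by decide⟩ - side ⟨1, by decide⟩ 0 - side ⟨9, by decide⟩ 0
          else if j.1 = 6 then obs ⟨1, by decide⟩ - side ⟨2, by decide⟩ 0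
          else if j.1 = 7 then obs ⟨3, by decide⟩ - side ⟨11, by decide⟩ 0
          else obs ⟨5, by decide⟩
      | 2 => fun obs side j => fun _ =>
          if j.1 = 9 then
            obs ⟨0, by decide⟩ - side ⟨1, by decide⟩ 0 - side ⟨5, by decide⟩ 0
          else if j.1 = 10 then obs ⟨2, by decide⟩ - side ⟨3, by decide⟩ 0
          else if j.1 = 11 then obs ⟨3, by decide⟩ - side ⟨7, by decide⟩ 0
          else obs ⟨6, by decide⟩
    correct := by
      intro x i j
      obtain ⟨jv, hj⟩ := j
      fin_cases i <;> fin_cases hj <;>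
        funext t <;> fin_cases t <;> simp <;> ring }, by decide, ?_⟩
  intro x
  refine ⟨rfl, rfl, rfl, rfl, rfl, rfl, rfl⟩
end
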